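/- arXiv:1906.07281 — 6 statements merged into one kernel-verified Lean document; each statement's English description precedes it below -/
import Mathlib

section
/- Let σ : ℝ² → ℝ³ be a C² parametrized surface with σ_u(u,v) and σ_v(u,v) linearly independent everywhere, let n = (σ_u × σ_v)/‖σ_u × σ_v‖ be the unit normal, and let Σ(u,v) be the 3×3 matrix with columns σ_u, σ_v, n. Let W(u,v) be the 2×2 Weingarten matrix defined by n_u = a σ_u + b σ_v, n_v = c σ_u + d σ_v with W = [[a, c],[b, d]]. Suppose u(t), v(t), r(t) are differentiable real functions such that the 2×2 matrix I − r(t) W(u(t),v(t)) is invertible for all t, and define c(t) = σ(u(t),v(t)) − r(t) n(u(t),v(t)). Then for all t, the column vector (u̇, v̇, ṙ)ᵀ equals the block-diagonal matrix diag((I − rW)⁻¹, −1) applied to Σ(u(t),v(t))⁻¹ ċ(t). -/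
/-- The cross product on `EuclideanSpace ℝ (Fin 3)`. -/
noncomputable def cross3 (a b : EuclideanSpace ℝ (Fin 3)) : EuclideanSpace ℝ (Fin 3) :=
  (EuclideanSpace.equiv (Fin 3) ℝ).symm
    (crossProduct ((EuclideanSpace.equiv (Fin 3) ℝ) a) ((EuclideanSpace.equiv (Fin 3) ℝ) b))

/-- The `3×3` matrix whose columns are `a`, `b`, `c`. -/
def frameMat (a b c : EuclideanSpace ℝ (Fin 3)) : Matrix (Fin 3) (Fin 3) ℝ :=
  Matrix.of fun i j => ![a i, b i, c i] j

/-- The block-diagonal `3×3` matrix with upper-left `2×2` block `M` and `(3,3)` entry `−1`. -/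
def blockDiag2 (M : Matrix (Fin 2) (Fin 2) ℝ) : Matrix (Fin 3) (Fin 3) ℝ :=
  Matrix.of ![![M 0 0, M 0 1, 0], ![M 1 0, M 1 1, 0], ![0, 0, -1]]

open Matrix

noncomputable def crossL : (Fin 3 → ℝ) →ₗ[ℝ] (Fin 3 → ℝ) →L[ℝ] (Fin 3 → ℝ) where
  toFun a := LinearMap.toContinuousLinearMap (crossProduct a)
  map_add' a b := by ext v; simp [map_add]
  map_smul' s a := by ext v; simp

noncomputable def crossCLM : (Fin 3 → ℝ) →L[ℝ] (Fin 3 → ℝ) →L[ℝ] (Fin 3 → ℝ) :=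
  LinearMap.toContinuousLinearMap crossL

lemma diff_cross3 {f g : ℝ × ℝ → EuclideanSpace ℝ (Fin 3)} (hf : Differentiable ℝ f)
    (hg : Differentiable ℝ g) : Differentiable ℝ fun p => cross3 (f p) (g p) := by
  set e := EuclideanSpace.equiv (Fin 3) ℝ with he
  have h1 : Differentiable ℝ fun p => crossCLM (e (f p)) (e (g p)) :=
    crossCLM.isBoundedBilinearMap.differentiable.comp
      ((e.toContinuousLinearMap.differentiable.comp hf).prodMk
        (e.toContinuousLinearMap.differentiable.comp hg))
  exact e.symm.toContinuousLinearMap.differentiable.comp h1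

section partials

variable {E : Type*} [NormedAddCommGroup E] [NormedSpace ℝ E]

lemma partial_fst {f : ℝ × ℝ → E} {p : ℝ × ℝ} (hf : DifferentiableAt ℝ f p) :
    HasDerivAt (fun x => f (x, p.2)) (fderiv ℝ f p (1, 0)) p.1 :=
  hf.hasFDerivAt.comp_hasDerivAt p.1 ((hasDerivAt_id p.1).prodMk (hasDerivAt_const p.1 p.2))

lemma partial_snd {f : ℝ × ℝ → E} {p : ℝ × ℝ} (hf : DifferentiableAt ℝ f p) :
    HasDerivAt (fun y => f (p.1, y)) (fderiv ℝ f p (0, 1)) p.2 :=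
  hf.hasFDerivAt.comp_hasDerivAt p.2 ((hasDerivAt_const p.2 p.1).prodMk (hasDerivAt_id p.2))

lemma fderiv_pair (f : ℝ × ℝ → E) {p : ℝ × ℝ} (a b : ℝ) :
    fderiv ℝ f p (a, b) = a • fderiv ℝ f p (1, 0) + b • fderiv ℝ f p (0, 1) := by
  have h : ((a, b) : ℝ × ℝ) = a • ((1:ℝ), (0:ℝ)) + b • ((0:ℝ), (1:ℝ)) := by
    simp [Prod.ext_iff]
  rw [h, map_add, _root_.map_smul, _root_.map_smul]

end partials

/-- The tracking differential equation in `ℝ³`: for a `C²` immersed surface `σ` with unit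
normal `n`, frame matrix `Σ = (σ_u, σ_v, n)`, Weingarten matrix `W`, and a curve
`c(t) = σ(u(t), v(t)) − r(t) n(u(t), v(t))` with `I − r W` invertible, one has
`(u̇, v̇, ṙ)ᵀ = diag((I − rW)⁻¹, −1) Σ⁻¹ ċ`. -/
theorem tracking_ode_R3
    (σ : ℝ × ℝ → EuclideanSpace ℝ (Fin 3)) (hσ : ContDiff ℝ 2 σ)
    (σu σv : ℝ × ℝ → EuclideanSpace ℝ (Fin 3))
    (hσu : ∀ p : ℝ × ℝ, HasDerivAt (fun x => σ (x, p.2)) (σu p) p.1)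
    (hσv : ∀ p : ℝ × ℝ, HasDerivAt (fun y => σ (p.1, y)) (σv p) p.2)
    (hindep : ∀ p, LinearIndependent ℝ ![σu p, σv p])
    (n : ℝ × ℝ → EuclideanSpace ℝ (Fin 3))
    (hn : ∀ p, n p = ‖cross3 (σu p) (σv p)‖⁻¹ • cross3 (σu p) (σv p))
    (nu nv : ℝ × ℝ → EuclideanSpace ℝ (Fin 3))
    (hnu : ∀ p : ℝ × ℝ, HasDerivAt (fun x => n (x, p.2)) (nu p) p.1)
    (hnv : ∀ p : ℝ × ℝ, HasDerivAt (fun y => n (p.1, y)) (nv p) p.2)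
    (W : ℝ × ℝ → Matrix (Fin 2) (Fin 2) ℝ)
    (hW1 : ∀ p, nu p = W p 0 0 • σu p + W p 1 0 • σv p)
    (hW2 : ∀ p, nv p = W p 0 1 • σu p + W p 1 1 • σv p)
    (u v r : ℝ → ℝ)
    (hu : Differentiable ℝ u) (hv : Differentiable ℝ v) (hrd : Differentiable ℝ r)
    (hinv : ∀ t, IsUnit (1 - r t • W (u t, v t)))
    (c : ℝ → EuclideanSpace ℝ (Fin 3))
    (hc : ∀ t, c t = σ (u t, v t) - r t • n (u t, v t)) :
    ∀ t, ![deriv u t, deriv v t, deriv r t]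
        = (blockDiag2 (1 - r t • W (u t, v t))⁻¹).mulVec
            ((frameMat (σu (u t, v t)) (σv (u t, v t)) (n (u t, v t)))⁻¹.mulVec
              ((EuclideanSpace.equiv (Fin 3) ℝ) (deriv c t))) := by
  have hσd : Differentiable ℝ σ := hσ.differentiable two_ne_zero
  have hσu_eq : ∀ q, σu q = fderiv ℝ σ q (1, 0) := fun q => (hσu q).unique (partial_fst (hσd q))
  have hσv_eq : ∀ q, σv q = fderiv ℝ σ q (0, 1) := fun q => (hσv q).unique (partial_snd (hσd q))
  have hfC : ContDiff ℝ 1 fun q => fderiv ℝ σ q := hσ.fderiv_right (by norm_num)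
  have hσud : Differentiable ℝ σu := by
    rw [funext hσu_eq]
    exact (hfC.clm_apply contDiff_const).differentiable one_ne_zero
  have hσvd : Differentiable ℝ σv := by
    rw [funext hσv_eq]
    exact (hfC.clm_apply contDiff_const).differentiable one_ne_zero
  have hgd : Differentiable ℝ fun q => cross3 (σu q) (σv q) := diff_cross3 hσud hσvd
  have hcp : ∀ q, crossProduct ((EuclideanSpace.equiv (Fin 3) ℝ) (σu q))
      ((EuclideanSpace.equiv (Fin 3) ℝ) (σv q)) ≠ 0 := by
    intro q
    rw [crossProduct_ne_zero_iff_linearIndependent]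
    have h := (hindep q).map' (EuclideanSpace.equiv (Fin 3) ℝ).toLinearEquiv.toLinearMap
      (EuclideanSpace.equiv (Fin 3) ℝ).toLinearEquiv.ker
    convert h using 1
    · funext i; fin_cases i <;> rfl
    · rfl
    · rfl
  have hg0 : ∀ q, cross3 (σu q) (σv q) ≠ 0 := by
    intro q h0
    apply hcp q
    have := congrArg (EuclideanSpace.equiv (Fin 3) ℝ) h0
    simpa [cross3] using this
  have hnd : Differentiable ℝ n := by
    rw [funext hn]
    exact fun q => (((hgd q).norm ℝ (hg0 q)).inv (norm_ne_zero_iff.mpr (hg0 q))).smul (hgd q)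
  have hnu_eq : ∀ q, nu q = fderiv ℝ n q (1, 0) := fun q => (hnu q).unique (partial_fst (hnd q))
  have hnv_eq : ∀ q, nv q = fderiv ℝ n q (0, 1) := fun q => (hnv q).unique (partial_snd (hnd q))
  intro t
  set p : ℝ × ℝ := (u t, v t) with hp
  set A := deriv u t with hA
  set B := deriv v t with hB
  set R := deriv r t with hR
  -- derivative of c
  have hγ : HasDerivAt (fun s => (u s, v s)) (A, B) t := ((hu t).hasDerivAt).prodMk ((hv t).hasDerivAt)
  have h1 : HasDerivAt (fun s => σ (u s, v s)) (fderiv ℝ σ p (A, B)) t :=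
    (hσd p).hasFDerivAt.comp_hasDerivAt t hγ
  have h2 : HasDerivAt (fun s => n (u s, v s)) (fderiv ℝ n p (A, B)) t :=
    (hnd p).hasFDerivAt.comp_hasDerivAt t hγ
  have h3 : HasDerivAt (fun s => r s • n (u s, v s))
      (r t • fderiv ℝ n p (A, B) + R • n p) t := ((hrd t).hasDerivAt).smul h2
  have h4 : HasDerivAt c (fderiv ℝ σ p (A, B) - (r t • fderiv ℝ n p (A, B) + R • n p)) t := by
    rw [funext hc]
    exact h1.sub h3
  have hdc : deriv c t = A • σu p + B • σv p -
      (r t • (A • nu p + B • nv p) + R • n p) := by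
    rw [h4.deriv, fderiv_pair σ, fderiv_pair n, ← hσu_eq, ← hσv_eq, ← hnu_eq, ← hnv_eq]
  -- algebra
  set M : Matrix (Fin 2) (Fin 2) ℝ := 1 - r t • W p with hM
  set x : Fin 3 → ℝ := ![M 0 0 * A + M 0 1 * B, M 1 0 * A + M 1 1 * B, -R] with hx
  have key : (frameMat (σu p) (σv p) (n p)).mulVec x
      = (EuclideanSpace.equiv (Fin 3) ℝ) (deriv c t) := by
    funext i
    rw [hdc]
    fin_cases i <;>
      · simp [frameMat, Matrix.mulVec, dotProduct, Fin.sum_univ_three, hx, hM,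
          hW1 p, hW2 p, PiLp.add_apply, PiLp.sub_apply, PiLp.smul_apply, smul_eq_mul,
          Matrix.sub_apply, Matrix.one_apply, Matrix.smul_apply]
        ring
  have hdet : (frameMat (σu p) (σv p) (n p)).det ≠ 0 := by
    have hd : (frameMat (σu p) (σv p) (n p)).det
        = ‖cross3 (σu p) (σv p)‖⁻¹ *
          (crossProduct ((EuclideanSpace.equiv (Fin 3) ℝ) (σu p))
              ((EuclideanSpace.equiv (Fin 3) ℝ) (σv p)) ⬝ᵥ
            crossProduct ((EuclideanSpace.equiv (Fin 3) ℝ) (σu p))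
              ((EuclideanSpace.equiv (Fin 3) ℝ) (σv p))) := by
      rw [hn p]
      simp [frameMat, Matrix.det_fin_three, cross3, cross_apply, dotProduct,
        Fin.sum_univ_three, PiLp.smul_apply, smul_eq_mul]
      ring
    rw [hd]
    exact mul_ne_zero (inv_ne_zero (norm_ne_zero_iff.mpr (hg0 p)))
      (fun h => hcp p (dotProduct_self_eq_zero.mp h))
  have hSig : (frameMat (σu p) (σv p) (n p))⁻¹ * frameMat (σu p) (σv p) (n p) = 1 :=
    Matrix.nonsing_inv_mul _ (isUnit_iff_ne_zero.mpr hdet)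
  have hxval : (frameMat (σu p) (σv p) (n p))⁻¹.mulVec
      ((EuclideanSpace.equiv (Fin 3) ℝ) (deriv c t)) = x := by
    rw [← key, Matrix.mulVec_mulVec, hSig, Matrix.one_mulVec]
  rw [hxval]
  have hMM : M⁻¹ * M = 1 := Matrix.nonsing_inv_mul M ((Matrix.isUnit_iff_isUnit_det M).mp (hinv t))
  have e00 := congrFun (congrFun hMM 0) 0
  have e01 := congrFun (congrFun hMM 0) 1
  have e10 := congrFun (congrFun hMM 1) 0
  have e11 := congrFun (congrFun hMM 1) 1
  simp [Matrix.mul_apply, Fin.sum_univ_two, Matrix.one_apply] at e00 e01 e10 e11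
  funext i
  fin_cases i
  · simp [blockDiag2, Matrix.mulVec, dotProduct, Fin.sum_univ_three, hx]
    linear_combination (-A) * e00 + (-B) * e01
  · simp [blockDiag2, Matrix.mulVec, dotProduct, Fin.sum_univ_three, hx]
    linear_combination (-A) * e10 + (-B) * e11
  · simp [blockDiag2, Matrix.mulVec, dotProduct, Fin.sum_univ_three, hx]
end

section
/- Let σ : ℝ² → ℝ³ be a C² parametrized surface with σ_u, σ_v linearly independent everywhere, unit normal n = (σ_u × σ_v)/‖σ_u × σ_v‖, frame matrix Σ with columns σ_u, σ_v, n, and Weingarten matrix W defined by n_u = a σ_u + b σ_v, n_v = c σ_u + d σ_v, W = [[a,c],[b,d]]. Assume the map (u,v) ↦ W(u,v) is Lipschitz, that −W(u,v) has only nonnegative eigenvalues for all (u,v), and that c : ℝ → ℝ³ is continuously differentiable. Then for any initial condition (u₀, v₀, r₀) with r₀ > 0, the initial value problem (u̇, v̇, ṙ)ᵀ = diag((I − rW(u,v))⁻¹, −1) Σ(u,v)⁻¹ ċ(t), (u,v,r)(0) = (u₀,v₀,r₀), has a solution on some open time interval containing 0, and this solution is locally unique. -/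
open Metric Set

/-- `f` is Lipschitz on some closed ball around `x₀`. -/
def LipAt (f : (Fin 3 → ℝ) → ℝ) (x₀ : Fin 3 → ℝ) : Prop :=
  ∃ K r : ℝ, 0 ≤ K ∧ 0 < r ∧
    ∀ x ∈ closedBall x₀ r, ∀ y ∈ closedBall x₀ r, |f x - f y| ≤ K * dist x y

variable {x₀ : Fin 3 → ℝ} {f g : (Fin 3 → ℝ) → ℝ}

lemma LipAt.congr (h : LipAt f x₀) (hfg : ∀ x, f x = g x) : LipAt g x₀ := by
  have : f = g := funext hfg
  rwa [← this]

lemma lipAt_const (c : ℝ) : LipAt (fun _ => c) x₀ :=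
  ⟨0, 1, le_refl 0, one_pos, fun x _ y _ => by simp⟩

lemma lipAt_coord (k : Fin 3) : LipAt (fun x => x k) x₀ :=
  ⟨1, 1, zero_le_one, one_pos, fun x _ y _ => by
    rw [one_mul, ← Real.dist_eq]; exact dist_le_pi_dist x y k⟩

lemma LipAt.add (hf : LipAt f x₀) (hg : LipAt g x₀) : LipAt (fun x => f x + g x) x₀ := by
  obtain ⟨K1, r1, hK1, hr1, h1⟩ := hf
  obtain ⟨K2, r2, hK2, hr2, h2⟩ := hg
  refine ⟨K1 + K2, min r1 r2, by linarith, lt_min hr1 hr2, fun x hx y hy => ?_⟩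
  have hx1 : x ∈ closedBall x₀ r1 := closedBall_subset_closedBall (min_le_left _ _) hx
  have hx2 : x ∈ closedBall x₀ r2 := closedBall_subset_closedBall (min_le_right _ _) hx
  have hy1 : y ∈ closedBall x₀ r1 := closedBall_subset_closedBall (min_le_left _ _) hy
  have hy2 : y ∈ closedBall x₀ r2 := closedBall_subset_closedBall (min_le_right _ _) hy
  calc |f x + g x - (f y + g y)| ≤ |f x - f y| + |g x - g y| := by
        have := abs_add_le (f x - f y) (g x - g y); rw [show f x - f y + (g x - g y) = f x + g x - (f y + g y) by ring] at this; exact this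
    _ ≤ K1 * dist x y + K2 * dist x y := add_le_add (h1 x hx1 y hy1) (h2 x hx2 y hy2)
    _ = (K1 + K2) * dist x y := by ring

lemma LipAt.bound (hf : LipAt f x₀) :
    ∃ M r : ℝ, 0 ≤ M ∧ 0 < r ∧ ∀ x ∈ closedBall x₀ r, |f x| ≤ M := by
  obtain ⟨K, r, hK, hr, h⟩ := hf
  refine ⟨|f x₀| + K * r, r, by positivity, hr, fun x hx => ?_⟩
  have h0 : x₀ ∈ closedBall x₀ r := mem_closedBall_self hr.le
  have := h x hx x₀ h0
  have hd : dist x x₀ ≤ r := mem_closedBall.mp hx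
  have : |f x - f x₀| ≤ K * r := this.trans (by nlinarith)
  calc |f x| = |f x - f x₀ + f x₀| := by ring_nf
    _ ≤ |f x - f x₀| + |f x₀| := abs_add_le _ _
    _ ≤ |f x₀| + K * r := by linarith

lemma LipAt.mul (hf : LipAt f x₀) (hg : LipAt g x₀) : LipAt (fun x => f x * g x) x₀ := by
  obtain ⟨K1, r1, hK1, hr1, h1⟩ := hf
  obtain ⟨K2, r2, hK2, hr2, h2⟩ := hg
  obtain ⟨M1, s1, hM1, hs1, hb1⟩ := LipAt.bound ⟨K1, r1, hK1, hr1, h1⟩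
  obtain ⟨M2, s2, hM2, hs2, hb2⟩ := LipAt.bound ⟨K2, r2, hK2, hr2, h2⟩
  refine ⟨M1 * K2 + M2 * K1, min (min r1 r2) (min s1 s2), by positivity,
    lt_min (lt_min hr1 hr2) (lt_min hs1 hs2), fun x hx y hy => ?_⟩
  have hx1 : x ∈ closedBall x₀ r1 := closedBall_subset_closedBall ((min_le_left _ _).trans (min_le_left _ _)) hx
  have hx2 : x ∈ closedBall x₀ r2 := closedBall_subset_closedBall ((min_le_left _ _).trans (min_le_right _ _)) hx
  have hy1 : y ∈ closedBall x₀ r1 := closedBall_subset_closedBall ((min_le_left _ _).trans (min_le_left _ _)) hy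
  have hy2 : y ∈ closedBall x₀ r2 := closedBall_subset_closedBall ((min_le_left _ _).trans (min_le_right _ _)) hy
  have hxs1 : x ∈ closedBall x₀ s1 := closedBall_subset_closedBall ((min_le_right _ _).trans (min_le_left _ _)) hx
  have hys2 : y ∈ closedBall x₀ s2 := closedBall_subset_closedBall ((min_le_right _ _).trans (min_le_right _ _)) hy
  calc |f x * g x - f y * g y| = |f x * (g x - g y) + g y * (f x - f y)| := by ring_nf
    _ ≤ |f x * (g x - g y)| + |g y * (f x - f y)| := abs_add_le _ _
    _ = |f x| * |g x - g y| + |g y| * |f x - f y| := by rw [abs_mul, abs_mul]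
    _ ≤ M1 * (K2 * dist x y) + M2 * (K1 * dist x y) := by
        gcongr
        · exact hb1 x hxs1
        · exact h2 x hx2 y hy2
        · exact hb2 y hys2
        · exact h1 x hx1 y hy1
    _ = (M1 * K2 + M2 * K1) * dist x y := by ring

lemma LipAt.neg (hf : LipAt f x₀) : LipAt (fun x => -f x) x₀ :=
  ((lipAt_const (-1)).mul hf).congr (fun x => by ring)

lemma LipAt.sub (hf : LipAt f x₀) (hg : LipAt g x₀) : LipAt (fun x => f x - g x) x₀ :=
  (hf.add hg.neg).congr (fun x => by ring)

lemma LipAt.inv (hf : LipAt f x₀) (h0 : f x₀ ≠ 0) : LipAt (fun x => (f x)⁻¹) x₀ := by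
  obtain ⟨K, r, hK, hr, h⟩ := hf
  set m := |f x₀| with hm
  have hm0 : 0 < m := abs_pos.mpr h0
  set r' := min r (m / (2 * (K + 1))) with hr'
  have hr'0 : 0 < r' := lt_min hr (by positivity)
  have hlb : ∀ x ∈ closedBall x₀ r', m / 2 ≤ |f x| := by
    intro x hx
    have hx1 : x ∈ closedBall x₀ r := closedBall_subset_closedBall (min_le_left _ _) hx
    have h0' : x₀ ∈ closedBall x₀ r := mem_closedBall_self hr.le
    have hd : dist x x₀ ≤ r' := mem_closedBall.mp hx
    have hKd : |f x - f x₀| ≤ K * r' := (h x hx1 x₀ h0').trans (by nlinarith)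
    have hr'le : r' ≤ m / (2 * (K + 1)) := min_le_right _ _
    have : K * r' ≤ m / 2 := by
      have : K * r' ≤ K * (m / (2 * (K + 1))) := by nlinarith
      have h2 : K * (m / (2 * (K + 1))) ≤ m / 2 := by
        have hq : m / (2 * (K + 1)) * (2 * (K + 1)) = m :=
          div_mul_cancel₀ _ (by positivity)
        nlinarith [div_nonneg hm0.le (by positivity : (0:ℝ) ≤ 2 * (K + 1))]
      linarith
    have := abs_sub_abs_le_abs_sub (f x₀) (f x)
    rw [abs_sub_comm (f x₀) (f x)] at this
    linarith
  refine ⟨K * (4 / m ^ 2), r', by positivity, hr'0, fun x hx y hy => ?_⟩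
  have hfx : f x ≠ 0 := by have := hlb x hx; intro hc; rw [hc] at this; simp at this; linarith
  have hfy : f y ≠ 0 := by have := hlb y hy; intro hc; rw [hc] at this; simp at this; linarith
  have hx1 : x ∈ closedBall x₀ r := closedBall_subset_closedBall (min_le_left _ _) hx
  have hy1 : y ∈ closedBall x₀ r := closedBall_subset_closedBall (min_le_left _ _) hy
  have key : (f x)⁻¹ - (f y)⁻¹ = (f y - f x) / (f x * f y) := by
    field_simp
  rw [key, abs_div, abs_mul]
  have hlx := hlb x hx
  have hly := hlb y hy
  have hprod : m ^ 2 / 4 ≤ |f x| * |f y| := by nlinarith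
  have hnum : |f y - f x| ≤ K * dist x y := by
    rw [abs_sub_comm]; exact h x hx1 y hy1
  rw [div_le_iff₀ (by nlinarith [abs_pos.mpr hfx, abs_pos.mpr hfy])]
  have hd0 : (0:ℝ) ≤ dist x y := dist_nonneg
  have hstep : K * (4 / m ^ 2) * dist x y * (m ^ 2 / 4) ≤
      K * (4 / m ^ 2) * dist x y * (|f x| * |f y|) := by
    have : (0:ℝ) ≤ K * (4 / m ^ 2) * dist x y := by positivity
    nlinarith
  have heq : K * (4 / m ^ 2) * dist x y * (m ^ 2 / 4) = K * dist x y := by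
    field_simp
  linarith

lemma lipAt_of_contDiffAt (hf : ContDiffAt ℝ 1 f x₀) : LipAt f x₀ := by
  obtain ⟨K, t, ht, hl⟩ := hf.exists_lipschitzOnWith
  obtain ⟨r, hr0, hball⟩ := Metric.mem_nhds_iff.mp ht
  refine ⟨K, r / 2, K.coe_nonneg, by linarith, fun x hx y hy => ?_⟩
  have hx' : x ∈ t := hball (lt_of_le_of_lt (mem_closedBall.mp hx) (by linarith))
  have hy' : y ∈ t := hball (lt_of_le_of_lt (mem_closedBall.mp hy) (by linarith))
  have := hl.dist_le_mul x hx' y hy'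
  rwa [Real.dist_eq] at this


lemma cross3_apply (a b : EuclideanSpace ℝ (Fin 3)) (i : Fin 3) :
    cross3 a b i = ![a 1 * b 2 - a 2 * b 1, a 2 * b 0 - a 0 * b 2, a 0 * b 1 - a 1 * b 0] i := by
  simp [cross3, crossProduct]

lemma cross3_ne_zero {a b : EuclideanSpace ℝ (Fin 3)}
    (h : LinearIndependent ℝ ![a, b]) : cross3 a b ≠ 0 := by
  have e := (EuclideanSpace.equiv (Fin 3) ℝ).toLinearEquiv
  set ea := (EuclideanSpace.equiv (Fin 3) ℝ) a
  set eb := (EuclideanSpace.equiv (Fin 3) ℝ) b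
  have hli : LinearIndependent ℝ ![ea, eb] := by
    have h2 := h.map' (EuclideanSpace.equiv (Fin 3) ℝ).toLinearEquiv.toLinearMap
      (LinearEquiv.ker _)
    have : ((EuclideanSpace.equiv (Fin 3) ℝ).toLinearEquiv.toLinearMap ∘ ![a, b]) = ![ea, eb] := by
      funext i; fin_cases i <;> rfl
    rwa [this] at h2
  have hcp : crossProduct ea eb ≠ 0 := crossProduct_ne_zero_iff_linearIndependent.mpr hli
  intro hc
  apply hcp
  have := congrArg (EuclideanSpace.equiv (Fin 3) ℝ) hc
  simpa [cross3] using this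

lemma det_frameMat_ne {a b : EuclideanSpace ℝ (Fin 3)}
    (h : LinearIndependent ℝ ![a, b]) :
    (frameMat a b (‖cross3 a b‖⁻¹ • cross3 a b)).det ≠ 0 := by
  set g := cross3 a b with hg
  have hgne : g ≠ 0 := cross3_ne_zero h
  have hcomp : ∃ i, g i ≠ 0 := by
    by_contra hc
    push_neg at hc
    exact hgne (by ext i; exact hc i)
  have h0 : g 0 = a 1 * b 2 - a 2 * b 1 := by rw [hg, cross3_apply a b 0]; rfl
  have h1 : g 1 = a 2 * b 0 - a 0 * b 2 := by rw [hg, cross3_apply a b 1]; rfl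
  have h2 : g 2 = a 0 * b 1 - a 1 * b 0 := by rw [hg, cross3_apply a b 2]; rfl
  have hdet : (frameMat a b (‖g‖⁻¹ • g)).det = ‖g‖⁻¹ * (g 0 ^ 2 + g 1 ^ 2 + g 2 ^ 2) := by
    have hsmul : ∀ i : Fin 3, (‖g‖⁻¹ • g) i = ‖g‖⁻¹ * g i := fun i => rfl
    simp only [Matrix.det_fin_three, frameMat, Matrix.of_apply]
    simp only [Matrix.cons_val_zero, Matrix.cons_val_one, Matrix.head_cons,
      Matrix.cons_val_two, Matrix.tail_cons]
    rw [hsmul 0, hsmul 1, hsmul 2, h0, h1, h2]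
    ring
  rw [hdet]
  have hpos : 0 < g 0 ^ 2 + g 1 ^ 2 + g 2 ^ 2 := by
    obtain ⟨i, hi⟩ := hcomp
    have hi' : g 0 ≠ 0 ∨ g 1 ≠ 0 ∨ g 2 ≠ 0 := by
      fin_cases i
      exacts [Or.inl hi, Or.inr (Or.inl hi), Or.inr (Or.inr hi)]
    rcases hi' with hi' | hi' | hi'
    · nlinarith [sq_nonneg (g 1), sq_nonneg (g 2),
        lt_of_le_of_ne (sq_nonneg (g 0)) (Ne.symm (pow_ne_zero 2 hi'))]
    · nlinarith [sq_nonneg (g 0), sq_nonneg (g 2),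
        lt_of_le_of_ne (sq_nonneg (g 1)) (Ne.symm (pow_ne_zero 2 hi'))]
    · nlinarith [sq_nonneg (g 0), sq_nonneg (g 1),
        lt_of_le_of_ne (sq_nonneg (g 2)) (Ne.symm (pow_ne_zero 2 hi'))]
  exact mul_ne_zero (inv_ne_zero (norm_ne_zero_iff.mpr hgne)) (ne_of_gt hpos)

lemma det_one_sub_smul_ne {W₀ : Matrix (Fin 2) (Fin 2) ℝ} {r : ℝ} (hr : 0 < r)
    (heig : ∀ μ : ℝ, ∀ x : Fin 2 → ℝ, x ≠ 0 → (-W₀).mulVec x = μ • x → 0 ≤ μ) :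
    (1 - r • W₀).det ≠ 0 := by
  intro h
  obtain ⟨v, hv, hveq⟩ := Matrix.exists_mulVec_eq_zero_iff.mpr h
  have h1 : v - r • W₀.mulVec v = 0 := by
    simpa [Matrix.sub_mulVec, Matrix.one_mulVec, Matrix.smul_mulVec] using hveq
  have h2 : W₀.mulVec v = r⁻¹ • v := by
    have hv' : v = r • W₀.mulVec v := sub_eq_zero.mp h1
    have : r⁻¹ • v = W₀.mulVec v := by
      conv_lhs => rw [hv']
      rw [smul_smul, inv_mul_cancel₀ hr.ne', one_smul]
    exact this.symm
  have h3 : (-W₀).mulVec v = (-r⁻¹) • v := by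
    rw [Matrix.neg_mulVec, h2, neg_smul]
  have := heig _ _ hv h3
  have := inv_pos.mpr hr
  linarith


lemma confine_right {F : ℝ → (Fin 3 → ℝ) → (Fin 3 → ℝ)} {x₀ : Fin 3 → ℝ} {C R ε : ℝ}
    (hC : 0 ≤ C) (hR : 0 < R) (hε : 0 < ε) (hεC : ε * C ≤ R)
    (hFb : ∀ t ∈ Ioo (-ε) ε, ∀ x ∈ closedBall x₀ R, ‖F t x‖ ≤ C)
    {f : ℝ → (Fin 3 → ℝ)} (hf0 : f 0 = x₀)
    (hf : ∀ t ∈ Ioo (-ε) ε, HasDerivAt f (F t (f t)) t) :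
    ∀ t ∈ Ico 0 ε, ‖f t - x₀‖ ≤ C * t := by
  intro T hT
  obtain ⟨hT0, hTε⟩ := hT
  have hCTR : C * T < R := by
    rcases eq_or_lt_of_le hC with h0 | h0
    · rw [← h0]; simpa using hR
    · calc C * T < C * ε := by exact mul_lt_mul_of_pos_left hTε h0
        _ ≤ R := by nlinarith
  set S : Set ℝ := {t | t ∈ Icc 0 T ∧ ∀ s ∈ Icc 0 t, ‖f s - x₀‖ ≤ C * s} with hS
  have h0S : (0 : ℝ) ∈ S := by
    refine ⟨⟨le_refl 0, hT0⟩, fun s hs => ?_⟩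
    have : s = 0 := le_antisymm hs.2 hs.1
    simp [this, hf0]
  have hbdd : BddAbove S := ⟨T, fun t ht => ht.1.2⟩
  set τ := sSup S with hτ
  have hτ0 : 0 ≤ τ := le_csSup hbdd h0S
  have hτT : τ ≤ T := csSup_le ⟨0, h0S⟩ fun t ht => ht.1.2
  -- membership of every s < τ is bounded
  have hlt : ∀ s, 0 ≤ s → s < τ → ‖f s - x₀‖ ≤ C * s := by
    intro s hs0 hsτ
    obtain ⟨t, htS, hst⟩ := exists_lt_of_lt_csSup ⟨0, h0S⟩ hsτ
    exact htS.2 s ⟨hs0, hst.le⟩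
  have hcont : ∀ s ∈ Ioo (-ε) ε, ContinuousAt f s := fun s hs => (hf s hs).continuousAt
  have hτIoo : τ ∈ Ioo (-ε) ε := ⟨by linarith, lt_of_le_of_lt hτT hTε⟩
  have hτbound : ‖f τ - x₀‖ ≤ C * τ := by
    rcases eq_or_lt_of_le hτ0 with h0 | h0
    · rw [← h0]; simp [hf0]
    · -- limit from the left
      have hcτ : ContinuousAt (fun s => C * s - ‖f s - x₀‖) τ := by
        exact (continuousAt_const.mul continuousAt_id).sub
          (((hcont τ hτIoo).sub continuousAt_const).norm)
      have hev : ∀ᶠ s in nhdsWithin τ (Iio τ), 0 ≤ C * s - ‖f s - x₀‖ := by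
        filter_upwards [Ioo_mem_nhdsLT_of_mem (show τ ∈ Ioc 0 τ from ⟨h0, le_refl τ⟩)] with s hs
        have := hlt s hs.1.le hs.2
        linarith
      have hne : (nhdsWithin τ (Iio τ)).NeBot := nhdsLT_neBot τ
      have := ge_of_tendsto (hcτ.continuousWithinAt.tendsto) hev
      linarith
  have hτS : τ ∈ S := by
    refine ⟨⟨hτ0, hτT⟩, fun s hs => ?_⟩
    rcases eq_or_lt_of_le hs.2 with h | h
    · rw [h]; exact hτbound
    · exact hlt s hs.1 h
  have hτeq : τ = T := by
    by_contra hne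
    have hτltT : τ < T := lt_of_le_of_ne hτT hne
    have hslack : 0 < R - C * T := by linarith
    obtain ⟨δ₁, hδ₁, hδball⟩ := Metric.continuousAt_iff.mp (hcont τ hτIoo) (R - C * T) hslack
    set δ := min (δ₁ / 2) (T - τ) with hδ
    have hδ0 : 0 < δ := lt_min (by linarith) (by linarith)
    have hmemIcc : ∀ s ∈ Icc τ (τ + δ), s ∈ Ioo (-ε) ε := by
      intro s hs
      constructor
      · linarith [hs.1]
      · have : s ≤ τ + δ := hs.2
        have : τ + δ ≤ T := by have := min_le_right (δ₁ / 2) (T - τ); linarith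
        linarith
    have hball : ∀ s ∈ Icc τ (τ + δ), f s ∈ closedBall x₀ R := by
      intro s hs
      have hds : dist s τ < δ₁ := by
        rw [Real.dist_eq, abs_of_nonneg (by linarith [hs.1])]
        have := hs.2
        have := min_le_left (δ₁ / 2) (T - τ)
        linarith
      have h1 : dist (f s) (f τ) < R - C * T := hδball hds
      have h2 : ‖f τ - x₀‖ ≤ C * τ := hτbound
      have : ‖f s - x₀‖ ≤ ‖f s - f τ‖ + ‖f τ - x₀‖ := by
        have := norm_add_le (f s - f τ) (f τ - x₀)
        simpa using this
      rw [mem_closedBall, dist_eq_norm]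
      rw [dist_eq_norm] at h1
      have hCτT : C * τ ≤ C * T := by nlinarith
      linarith
    have hderiv : ∀ s ∈ Icc τ (τ + δ),
        HasDerivWithinAt f (F s (f s)) (Icc τ (τ + δ)) s := fun s hs =>
      (hf s (hmemIcc s hs)).hasDerivWithinAt
    have hbound : ∀ s ∈ Ico τ (τ + δ), ‖F s (f s)‖ ≤ C := fun s hs =>
      hFb s (hmemIcc s (Ico_subset_Icc_self hs)) (f s) (hball s (Ico_subset_Icc_self hs))
    have hmvt := norm_image_sub_le_of_norm_deriv_le_segment' hderiv hbound
    have hτδS : τ + δ ∈ S := by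
      refine ⟨⟨by linarith, by have := min_le_right (δ₁ / 2) (T - τ); linarith⟩, fun s hs => ?_⟩
      rcases le_or_gt s τ with h | h
      · exact hτS.2 s ⟨hs.1, h⟩
      · have hsIcc : s ∈ Icc τ (τ + δ) := ⟨h.le, hs.2⟩
        have := hmvt s hsIcc
        have h2 : ‖f s - x₀‖ ≤ ‖f s - f τ‖ + ‖f τ - x₀‖ := by
          have := norm_add_le (f s - f τ) (f τ - x₀)
          simpa using this
        have := hτbound
        nlinarith
    have : τ + δ ≤ τ := le_csSup hbdd hτδS
    linarith
  have := hτS.2 T ⟨hT0, by rw [hτeq]⟩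
  exact this


lemma confine {F : ℝ → (Fin 3 → ℝ) → (Fin 3 → ℝ)} {x₀ : Fin 3 → ℝ} {C R ε : ℝ}
    (hC : 0 ≤ C) (hR : 0 < R) (hε : 0 < ε) (hεC : ε * C ≤ R)
    (hFb : ∀ t ∈ Ioo (-ε) ε, ∀ x ∈ closedBall x₀ R, ‖F t x‖ ≤ C)
    {f : ℝ → (Fin 3 → ℝ)} (hf0 : f 0 = x₀)
    (hf : ∀ t ∈ Ioo (-ε) ε, HasDerivAt f (F t (f t)) t) :
    ∀ t ∈ Ioo (-ε) ε, f t ∈ closedBall x₀ R := by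
  have hright := confine_right hC hR hε hεC hFb hf0 hf
  set G : ℝ → (Fin 3 → ℝ) → (Fin 3 → ℝ) := fun t x => -(F (-t) x) with hG
  set g : ℝ → (Fin 3 → ℝ) := fun s => f (-s) with hg
  have hg0 : g 0 = x₀ := by simp [hg, hf0]
  have hgderiv : ∀ t ∈ Ioo (-ε) ε, HasDerivAt g (G t (g t)) t := by
    intro t ht
    have hmt : -t ∈ Ioo (-ε) ε := ⟨by linarith [ht.2], by linarith [ht.1]⟩
    have h1 := hf (-t) hmt
    have h2 : HasDerivAt (fun s : ℝ => -s) (-1 : ℝ) t := (hasDerivAt_neg t)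
    have := HasDerivAt.scomp t h1 h2
    simpa [hg, hG, Function.comp_def] using this
  have hGb : ∀ t ∈ Ioo (-ε) ε, ∀ x ∈ closedBall x₀ R, ‖G t x‖ ≤ C := by
    intro t ht x hx
    have hmt : -t ∈ Ioo (-ε) ε := ⟨by linarith [ht.2], by linarith [ht.1]⟩
    simpa [hG] using hFb (-t) hmt x hx
  have hleft := confine_right hC hR hε hεC hGb hg0 hgderiv
  intro t ht
  rw [mem_closedBall, dist_eq_norm]
  rcases le_or_gt 0 t with h | h
  · have := hright t ⟨h, ht.2⟩
    nlinarith [ht.2]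
  · have hmt : -t ∈ Ico 0 ε := ⟨by linarith, by linarith [ht.1]⟩
    have := hleft (-t) hmt
    simp only [hg, neg_neg] at this
    nlinarith [ht.1]


lemma lipAt_matrix {Φ : (Fin 3 → ℝ) → Matrix (Fin 3) (Fin 3) ℝ} {x₀ : Fin 3 → ℝ}
    (h : ∀ i j, LipAt (fun x => Φ x i j) x₀) :
    ∃ K r : ℝ, 0 ≤ K ∧ 0 < r ∧ ∀ x ∈ closedBall x₀ r, ∀ y ∈ closedBall x₀ r,
      ∀ i j, |Φ x i j - Φ y i j| ≤ K * dist x y := by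
  have h' : ∀ ij : Fin 3 × Fin 3, ∃ K r : ℝ, 0 ≤ K ∧ 0 < r ∧
      ∀ x ∈ closedBall x₀ r, ∀ y ∈ closedBall x₀ r,
        |Φ x ij.1 ij.2 - Φ y ij.1 ij.2| ≤ K * dist x y := fun ij => h ij.1 ij.2
  choose K r hK hr hl using h'
  refine ⟨∑ ij : Fin 3 × Fin 3, K ij,
    Finset.univ.inf' ⟨(0, 0), Finset.mem_univ _⟩ r,
    Finset.sum_nonneg fun ij _ => hK ij, ?_, ?_⟩
  · obtain ⟨ij, _, hij⟩ := Finset.exists_mem_eq_inf' ⟨(0, 0), Finset.mem_univ _⟩ r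
    rw [hij]; exact hr ij
  · intro x hx y hy i j
    have hsub : closedBall x₀ (Finset.univ.inf' ⟨(0, 0), Finset.mem_univ _⟩ r) ⊆
        closedBall x₀ (r (i, j)) :=
      closedBall_subset_closedBall (Finset.inf'_le r (Finset.mem_univ (i, j)))
    have := hl (i, j) x (hsub hx) y (hsub hy)
    have hKle : K (i, j) ≤ ∑ ij : Fin 3 × Fin 3, K ij :=
      Finset.single_le_sum (fun ij _ => hK ij) (Finset.mem_univ (i, j))
    have hd : (0:ℝ) ≤ dist x y := dist_nonneg
    nlinarith


section A
variable (σ : ℝ × ℝ → EuclideanSpace ℝ (Fin 3)) (hσ : ContDiff ℝ 2 σ)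
    (σu σv : ℝ × ℝ → EuclideanSpace ℝ (Fin 3))
    (hσu : ∀ p : ℝ × ℝ, HasDerivAt (fun x => σ (x, p.2)) (σu p) p.1)
    (hσv : ∀ p : ℝ × ℝ, HasDerivAt (fun y => σ (p.1, y)) (σv p) p.2)

include hσ hσu in
lemma sigma_u_contDiff : ContDiff ℝ 1 σu := by
  have hσdiff : Differentiable ℝ σ := hσ.differentiable (by norm_num)
  have hσu_eq : σu = fun p => fderiv ℝ σ p (1, 0) := by
    funext p
    have hline : HasDerivAt (fun x : ℝ => (x, p.2)) ((1 : ℝ), (0 : ℝ)) p.1 :=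
      (hasDerivAt_id p.1).prodMk (hasDerivAt_const p.1 p.2)
    have hd : HasFDerivAt σ (fderiv ℝ σ p) (p.1, p.2) := by
      rw [Prod.mk.eta]; exact (hσdiff p).hasFDerivAt
    have hcomp := hd.comp_hasDerivAt p.1 hline
    exact (hσu p).unique hcomp
  rw [hσu_eq]
  exact (hσ.fderiv_right (by norm_num)).clm_apply contDiff_const

include hσ hσv in
lemma sigma_v_contDiff : ContDiff ℝ 1 σv := by
  have hσdiff : Differentiable ℝ σ := hσ.differentiable (by norm_num)
  have hσv_eq : σv = fun p => fderiv ℝ σ p (0, 1) := by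
    funext p
    have hline : HasDerivAt (fun y : ℝ => (p.1, y)) ((0 : ℝ), (1 : ℝ)) p.2 :=
      (hasDerivAt_const p.2 p.1).prodMk (hasDerivAt_id p.2)
    have hd : HasFDerivAt σ (fderiv ℝ σ p) (p.1, p.2) := by
      rw [Prod.mk.eta]; exact (hσdiff p).hasFDerivAt
    have hcomp := hd.comp_hasDerivAt p.2 hline
    exact (hσv p).unique hcomp
  rw [hσv_eq]
  exact (hσ.fderiv_right (by norm_num)).clm_apply contDiff_const
end A

lemma cross_comp_contDiff {σu σv : ℝ × ℝ → EuclideanSpace ℝ (Fin 3)}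
    (hσu : ContDiff ℝ 1 σu) (hσv : ContDiff ℝ 1 σv) :
    ContDiff ℝ 1 (fun p => cross3 (σu p) (σv p)) := by
  have hu : ∀ i, ContDiff ℝ 1 fun p => σu p i := fun i => contDiff_euclidean.mp hσu i
  have hv : ∀ i, ContDiff ℝ 1 fun p => σv p i := fun i => contDiff_euclidean.mp hσv i
  rw [contDiff_euclidean]
  intro i
  have h : (fun p => cross3 (σu p) (σv p) i) =
      fun p => ![σu p 1 * σv p 2 - σu p 2 * σv p 1,
        σu p 2 * σv p 0 - σu p 0 * σv p 2,
        σu p 0 * σv p 1 - σu p 1 * σv p 0] i :=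
    funext fun p => cross3_apply _ _ i
  rw [h]
  fin_cases i
  · exact ((hu 1).mul (hv 2)).sub ((hu 2).mul (hv 1))
  · exact ((hu 2).mul (hv 0)).sub ((hu 0).mul (hv 2))
  · exact ((hu 0).mul (hv 1)).sub ((hu 1).mul (hv 0))

lemma n_contDiff {σu σv n : ℝ × ℝ → EuclideanSpace ℝ (Fin 3)}
    (hσu : ContDiff ℝ 1 σu) (hσv : ContDiff ℝ 1 σv)
    (hindep : ∀ p, LinearIndependent ℝ ![σu p, σv p])
    (hn : ∀ p, n p = ‖cross3 (σu p) (σv p)‖⁻¹ • cross3 (σu p) (σv p)) :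
    ContDiff ℝ 1 n := by
  have hg_cd := cross_comp_contDiff hσu hσv
  have hg_ne : ∀ p, cross3 (σu p) (σv p) ≠ 0 := fun p => cross3_ne_zero (hindep p)
  have hn_eq : n = fun p => ‖cross3 (σu p) (σv p)‖⁻¹ • cross3 (σu p) (σv p) := funext hn
  rw [hn_eq, contDiff_iff_contDiffAt]
  intro p
  exact ((hg_cd.contDiffAt.norm ℝ (hg_ne p)).inv
    (norm_ne_zero_iff.mpr (hg_ne p))).smul hg_cd.contDiffAt


/-- Local existence and uniqueness for the tracking differential equation
`(u̇, v̇, ṙ)ᵀ = diag((I − rW)⁻¹, −1) Σ⁻¹ ċ` when the Weingarten matrix `W` is Lipschitz,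
`−W` has nonnegative eigenvalues, and `c` is continuously differentiable. -/
theorem tracking_ode_exists_unique
    (σ : ℝ × ℝ → EuclideanSpace ℝ (Fin 3)) (hσ : ContDiff ℝ 2 σ)
    (σu σv : ℝ × ℝ → EuclideanSpace ℝ (Fin 3))
    (hσu : ∀ p : ℝ × ℝ, HasDerivAt (fun x => σ (x, p.2)) (σu p) p.1)
    (hσv : ∀ p : ℝ × ℝ, HasDerivAt (fun y => σ (p.1, y)) (σv p) p.2)
    (hindep : ∀ p, LinearIndependent ℝ ![σu p, σv p])
    (n : ℝ × ℝ → EuclideanSpace ℝ (Fin 3))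
    (hn : ∀ p, n p = ‖cross3 (σu p) (σv p)‖⁻¹ • cross3 (σu p) (σv p))
    (nu nv : ℝ × ℝ → EuclideanSpace ℝ (Fin 3))
    (hnu : ∀ p : ℝ × ℝ, HasDerivAt (fun x => n (x, p.2)) (nu p) p.1)
    (hnv : ∀ p : ℝ × ℝ, HasDerivAt (fun y => n (p.1, y)) (nv p) p.2)
    (W : ℝ × ℝ → Matrix (Fin 2) (Fin 2) ℝ)
    (hW1 : ∀ p, nu p = W p 0 0 • σu p + W p 1 0 • σv p)
    (hW2 : ∀ p, nv p = W p 0 1 • σu p + W p 1 1 • σv p)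
    (L : ℝ)
    (hWLip : ∀ p q : ℝ × ℝ, ∀ i j, |W p i j - W q i j| ≤ L * dist p q)
    (heig : ∀ p, ∀ μ : ℝ, ∀ x : Fin 2 → ℝ, x ≠ 0 → (-(W p)).mulVec x = μ • x → 0 ≤ μ)
    (c : ℝ → EuclideanSpace ℝ (Fin 3)) (hc : ContDiff ℝ 1 c)
    (F : ℝ → (Fin 3 → ℝ) → (Fin 3 → ℝ))
    (hF : ∀ t x, F t x
      = (blockDiag2 (1 - x 2 • W (x 0, x 1))⁻¹).mulVec
          ((frameMat (σu (x 0, x 1)) (σv (x 0, x 1)) (n (x 0, x 1)))⁻¹.mulVec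
            ((EuclideanSpace.equiv (Fin 3) ℝ) (deriv c t))))
    (u₀ v₀ r₀ : ℝ) (hr₀ : 0 < r₀) :
    ∃ ε > (0 : ℝ),
      (∃ f : ℝ → (Fin 3 → ℝ), f 0 = ![u₀, v₀, r₀] ∧
        ∀ t ∈ Set.Ioo (-ε) ε, HasDerivAt f (F t (f t)) t) ∧
      ∀ f g : ℝ → (Fin 3 → ℝ), f 0 = ![u₀, v₀, r₀] → g 0 = ![u₀, v₀, r₀] →
        (∀ t ∈ Set.Ioo (-ε) ε, HasDerivAt f (F t (f t)) t) →
        (∀ t ∈ Set.Ioo (-ε) ε, HasDerivAt g (F t (g t)) t) →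
        Set.EqOn f g (Set.Ioo (-ε) ε) := by
  classical
  -- basic objects
  set x₀v : Fin 3 → ℝ := ![u₀, v₀, r₀] with hx₀v
  set p₀ : ℝ × ℝ := (u₀, v₀) with hp₀
  set w : ℝ → (Fin 3 → ℝ) := fun t => (EuclideanSpace.equiv (Fin 3) ℝ) (deriv c t) with hw
  have hw_cont : Continuous w :=
    (EuclideanSpace.equiv (Fin 3) ℝ).continuous.comp (hc.continuous_deriv le_rfl)
  set q : (Fin 3 → ℝ) → ℝ × ℝ := fun x => (x 0, x 1) with hqdef
  set N : (Fin 3 → ℝ) → Matrix (Fin 2) (Fin 2) ℝ := fun x => 1 - x 2 • W (q x) with hNdef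
  set Fm : (Fin 3 → ℝ) → Matrix (Fin 3) (Fin 3) ℝ :=
    fun x => frameMat (σu (q x)) (σv (q x)) (n (q x)) with hFmdef
  set Φ : (Fin 3 → ℝ) → Matrix (Fin 3) (Fin 3) ℝ :=
    fun x => blockDiag2 (N x)⁻¹ * (Fm x)⁻¹ with hΦdef
  have hFeq : ∀ t x, F t x = (Φ x).mulVec (w t) := by
    intro t x
    rw [hF, Matrix.mulVec_mulVec]
  -- smoothness of the frame
  have hσu_cd : ContDiff ℝ 1 σu := sigma_u_contDiff σ hσ σu hσu
  have hσv_cd : ContDiff ℝ 1 σv := sigma_v_contDiff σ hσ σv hσv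
  have hn_cd : ContDiff ℝ 1 n := n_contDiff hσu_cd hσv_cd hindep hn
  have hq_cd : ContDiff ℝ 1 q := by
    apply ContDiff.prodMk
    · exact (ContinuousLinearMap.proj (R := ℝ) (φ := fun _ : Fin 3 => ℝ) 0).contDiff
    · exact (ContinuousLinearMap.proj (R := ℝ) (φ := fun _ : Fin 3 => ℝ) 1).contDiff
  -- Lipschitz facts for W entries
  have hL0 : 0 ≤ L := by
    have h := hWLip (0, 0) (1, 0) 0 0
    have hd : dist ((0 : ℝ), (0 : ℝ)) ((1 : ℝ), (0 : ℝ)) = 1 := by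
      rw [Prod.dist_eq]; simp [Real.dist_eq]
    rw [hd, mul_one] at h
    exact le_trans (abs_nonneg _) h
  have hWlipat : ∀ i j, LipAt (fun x => W (q x) i j) x₀v := by
    intro i j
    refine ⟨L, 1, hL0, one_pos, fun x _ y _ => ?_⟩
    have h1 := hWLip (q x) (q y) i j
    have h2 : dist (q x) (q y) ≤ dist x y := by
      rw [Prod.dist_eq]
      exact max_le (dist_le_pi_dist x y 0) (dist_le_pi_dist x y 1)
    calc |W (q x) i j - W (q y) i j| ≤ L * dist (q x) (q y) := h1
      _ ≤ L * dist x y := mul_le_mul_of_nonneg_left h2 hL0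
  have hNlip : ∀ i j, LipAt (fun x => N x i j) x₀v := by
    intro i j
    have h : LipAt (fun x => (1 : Matrix (Fin 2) (Fin 2) ℝ) i j - x 2 * W (q x) i j) x₀v :=
      (lipAt_const _).sub ((lipAt_coord 2).mul (hWlipat i j))
    exact h.congr fun x => by
      simp [hNdef, Matrix.sub_apply, Matrix.smul_apply, smul_eq_mul]
  -- determinant of the 2x2 block
  set d1 : (Fin 3 → ℝ) → ℝ := fun x => (N x).det with hd1def
  have hd1lip : LipAt d1 x₀v :=
    ((((hNlip 0 0).mul (hNlip 1 1)).sub ((hNlip 0 1).mul (hNlip 1 0))).congr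
      fun x => (Matrix.det_fin_two (N x)).symm)
  have hd1x₀ : d1 x₀v ≠ 0 := by
    have hNx₀ : N x₀v = 1 - r₀ • W p₀ := rfl
    rw [hd1def]
    show (N x₀v).det ≠ 0
    rw [hNx₀]
    exact det_one_sub_smul_ne hr₀ (heig p₀)
  have hd1inv : LipAt (fun x => (d1 x)⁻¹) x₀v := hd1lip.inv hd1x₀
  have hNinv_entry : ∀ x, (N x)⁻¹
      = (d1 x)⁻¹ • !![N x 1 1, -(N x 0 1); -(N x 1 0), N x 0 0] := by
    intro x
    rw [Matrix.inv_def, Matrix.adjugate_fin_two, Ring.inverse_eq_inv]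
  have hBmat : ∀ x, blockDiag2 (N x)⁻¹ = Matrix.of
      ![![(d1 x)⁻¹ * N x 1 1, (d1 x)⁻¹ * -(N x 0 1), 0],
        ![(d1 x)⁻¹ * -(N x 1 0), (d1 x)⁻¹ * N x 0 0, 0],
        ![0, 0, -1]] := by
    intro x
    rw [hNinv_entry x]
    rfl
  have hBlip : ∀ i j, LipAt (fun x => blockDiag2 (N x)⁻¹ i j) x₀v := by
    intro i j
    fin_cases i <;> fin_cases j
    · exact (hd1inv.mul (hNlip 1 1)).congr fun x => by simp [hBmat x]
    · exact (hd1inv.mul (hNlip 0 1).neg).congr fun x => by simp [hBmat x]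
    · exact (lipAt_const 0).congr fun x => by simp [hBmat x]
    · exact (hd1inv.mul (hNlip 1 0).neg).congr fun x => by simp [hBmat x]
    · exact (hd1inv.mul (hNlip 0 0)).congr fun x => by simp [hBmat x]
    · exact (lipAt_const 0).congr fun x => by simp [hBmat x]
    · exact (lipAt_const 0).congr fun x => by simp [hBmat x]
    · exact (lipAt_const 0).congr fun x => by simp [hBmat x]
    · exact (lipAt_const (-1)).congr fun x => by simp [hBmat x]
  -- frame matrix entries
  have hFmentry_cd : ∀ i j, ContDiff ℝ 1 (fun x => Fm x i j) := by
    intro i j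
    have hu := contDiff_euclidean.mp hσu_cd i
    have hv := contDiff_euclidean.mp hσv_cd i
    have hw' := contDiff_euclidean.mp hn_cd i
    fin_cases j
    · exact (hu.comp hq_cd : ContDiff ℝ 1 fun x => σu (q x) i)
    · exact (hv.comp hq_cd : ContDiff ℝ 1 fun x => σv (q x) i)
    · exact (hw'.comp hq_cd : ContDiff ℝ 1 fun x => n (q x) i)
  have hFmlipat : ∀ i j, LipAt (fun x => Fm x i j) x₀v := fun i j =>
    lipAt_of_contDiffAt (hFmentry_cd i j).contDiffAt
  set d2 : (Fin 3 → ℝ) → ℝ := fun x => (Fm x).det with hd2def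
  have hd2lip : LipAt d2 x₀v := by
    have h := (((((((hFmlipat 0 0).mul (hFmlipat 1 1)).mul (hFmlipat 2 2)).sub
      (((hFmlipat 0 0).mul (hFmlipat 1 2)).mul (hFmlipat 2 1))).sub
      (((hFmlipat 0 1).mul (hFmlipat 1 0)).mul (hFmlipat 2 2))).add
      (((hFmlipat 0 1).mul (hFmlipat 1 2)).mul (hFmlipat 2 0))).add
      (((hFmlipat 0 2).mul (hFmlipat 1 0)).mul (hFmlipat 2 1))).sub
      (((hFmlipat 0 2).mul (hFmlipat 1 1)).mul (hFmlipat 2 0))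
    exact h.congr fun x => by
      show _ = (Fm x).det
      rw [Matrix.det_fin_three (Fm x)]
  have hd2x₀ : d2 x₀v ≠ 0 := by
    have : Fm x₀v = frameMat (σu p₀) (σv p₀) (n p₀) := rfl
    rw [hd2def]
    show (Fm x₀v).det ≠ 0
    rw [this, hn p₀]
    exact det_frameMat_ne (hindep p₀)
  have hd2inv : LipAt (fun x => (d2 x)⁻¹) x₀v := hd2lip.inv hd2x₀
  have hFminv_entry : ∀ x, (Fm x)⁻¹ = (d2 x)⁻¹ • (Fm x).adjugate := by
    intro x
    rw [Matrix.inv_def, Ring.inverse_eq_inv]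
  have hadjlip : ∀ i j, LipAt (fun x => (Fm x).adjugate i j) x₀v := by
    intro i j
    fin_cases i <;> fin_cases j
    · exact (((hFmlipat 1 1).mul (hFmlipat 2 2)).sub ((hFmlipat 1 2).mul (hFmlipat 2 1))).congr
        fun x => by rw [Matrix.adjugate_fin_three]; simp
    · exact ((((hFmlipat 0 1).mul (hFmlipat 2 2)).neg).add ((hFmlipat 0 2).mul (hFmlipat 2 1))).congr
        fun x => by rw [Matrix.adjugate_fin_three]; simp
    · exact (((hFmlipat 0 1).mul (hFmlipat 1 2)).sub ((hFmlipat 0 2).mul (hFmlipat 1 1))).congr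
        fun x => by rw [Matrix.adjugate_fin_three]; simp
    · exact ((((hFmlipat 1 0).mul (hFmlipat 2 2)).neg).add ((hFmlipat 1 2).mul (hFmlipat 2 0))).congr
        fun x => by rw [Matrix.adjugate_fin_three]; simp
    · exact (((hFmlipat 0 0).mul (hFmlipat 2 2)).sub ((hFmlipat 0 2).mul (hFmlipat 2 0))).congr
        fun x => by rw [Matrix.adjugate_fin_three]; simp
    · exact ((((hFmlipat 0 0).mul (hFmlipat 1 2)).neg).add ((hFmlipat 0 2).mul (hFmlipat 1 0))).congr
        fun x => by rw [Matrix.adjugate_fin_three]; simp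
    · exact (((hFmlipat 1 0).mul (hFmlipat 2 1)).sub ((hFmlipat 1 1).mul (hFmlipat 2 0))).congr
        fun x => by rw [Matrix.adjugate_fin_three]; simp
    · exact ((((hFmlipat 0 0).mul (hFmlipat 2 1)).neg).add ((hFmlipat 0 1).mul (hFmlipat 2 0))).congr
        fun x => by rw [Matrix.adjugate_fin_three]; simp
    · exact (((hFmlipat 0 0).mul (hFmlipat 1 1)).sub ((hFmlipat 0 1).mul (hFmlipat 1 0))).congr
        fun x => by rw [Matrix.adjugate_fin_three]; simp
  have hFminvlip : ∀ i j, LipAt (fun x => (Fm x)⁻¹ i j) x₀v := fun i j =>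
    (hd2inv.mul (hadjlip i j)).congr fun x => by
      rw [hFminv_entry x]; simp [Matrix.smul_apply, smul_eq_mul]
  have hΦlip : ∀ i j, LipAt (fun x => Φ x i j) x₀v := by
    intro i j
    have h : LipAt (fun x => blockDiag2 (N x)⁻¹ i 0 * (Fm x)⁻¹ 0 j
        + blockDiag2 (N x)⁻¹ i 1 * (Fm x)⁻¹ 1 j
        + blockDiag2 (N x)⁻¹ i 2 * (Fm x)⁻¹ 2 j) x₀v :=
      (((hBlip i 0).mul (hFminvlip 0 j)).add ((hBlip i 1).mul (hFminvlip 1 j))).add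
        ((hBlip i 2).mul (hFminvlip 2 j))
    exact h.congr fun x => by
      rw [hΦdef]
      show _ = (blockDiag2 (N x)⁻¹ * (Fm x)⁻¹) i j
      rw [Matrix.mul_apply, Fin.sum_univ_three]
  obtain ⟨K, R, hK0, hR0, hKlip⟩ := lipAt_matrix hΦlip
  -- bound for w on [-1,1]
  obtain ⟨Cw0, hCw0⟩ := (isCompact_Icc (a := (-1 : ℝ)) (b := 1)).exists_bound_of_continuousOn
    hw_cont.continuousOn
  set Cw : ℝ := max Cw0 0 with hCwdef
  have hCw_nonneg : 0 ≤ Cw := le_max_right _ _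
  have hCwb : ∀ t ∈ Icc (-1 : ℝ) 1, ‖w t‖ ≤ Cw := fun t ht =>
    (hCw0 t ht).trans (le_max_left _ _)
  -- bound for Φ on the ball
  set MΦ : ℝ := (∑ ij : Fin 3 × Fin 3, |Φ x₀v ij.1 ij.2|) + K * R with hMΦdef
  have hMΦ0 : 0 ≤ MΦ :=
    add_nonneg (Finset.sum_nonneg fun _ _ => abs_nonneg _) (mul_nonneg hK0 hR0.le)
  have hΦbound : ∀ x ∈ closedBall x₀v R, ∀ i j, |Φ x i j| ≤ MΦ := by
    intro x hx i j
    have h1 := hKlip x hx x₀v (mem_closedBall_self hR0.le) i j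
    have h2 : |Φ x₀v i j| ≤ ∑ ij : Fin 3 × Fin 3, |Φ x₀v ij.1 ij.2| :=
      Finset.single_le_sum (f := fun ij : Fin 3 × Fin 3 => |Φ x₀v ij.1 ij.2|)
        (fun _ _ => abs_nonneg _) (Finset.mem_univ (i, j))
    have hd : dist x x₀v ≤ R := mem_closedBall.mp hx
    have h3 : |Φ x i j| ≤ |Φ x i j - Φ x₀v i j| + |Φ x₀v i j| := by
      have := abs_add_le (Φ x i j - Φ x₀v i j) (Φ x₀v i j)
      simpa using this
    have h4 : K * dist x x₀v ≤ K * R := mul_le_mul_of_nonneg_left hd hK0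
    rw [hMΦdef]
    linarith
  -- norm bound for F
  set C : ℝ := 3 * MΦ * Cw + 1 with hCdef
  have hC1 : (1 : ℝ) ≤ C := by rw [hCdef]; nlinarith
  have hC0 : (0 : ℝ) < C := by linarith
  have hmulVec_entry : ∀ (A : Matrix (Fin 3) (Fin 3) ℝ) (v : Fin 3 → ℝ) (i : Fin 3),
      A.mulVec v i = A i 0 * v 0 + A i 1 * v 1 + A i 2 * v 2 := by
    intro A v i
    simp [Matrix.mulVec, dotProduct, Fin.sum_univ_three]
  have hwj : ∀ t ∈ Icc (-1 : ℝ) 1, ∀ j, |w t j| ≤ Cw := by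
    intro t ht j
    have h1 : ‖w t j‖ ≤ ‖w t‖ := norm_le_pi_norm (w t) j
    have h2 := hCwb t ht
    rw [Real.norm_eq_abs] at h1
    linarith
  have hFnorm : ∀ t ∈ Icc (-1 : ℝ) 1, ∀ x ∈ closedBall x₀v R, ‖F t x‖ ≤ C := by
    intro t ht x hx
    rw [hFeq]
    rw [pi_norm_le_iff_of_nonneg hC0.le]
    intro i
    rw [Real.norm_eq_abs, hmulVec_entry]
    have hb : ∀ j : Fin 3, |Φ x i j * w t j| ≤ MΦ * Cw := by
      intro j
      rw [abs_mul]
      exact mul_le_mul (hΦbound x hx i j) (hwj t ht j) (abs_nonneg _) hMΦ0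
    calc |Φ x i 0 * w t 0 + Φ x i 1 * w t 1 + Φ x i 2 * w t 2|
        ≤ |Φ x i 0 * w t 0 + Φ x i 1 * w t 1| + |Φ x i 2 * w t 2| := abs_add_le _ _
      _ ≤ |Φ x i 0 * w t 0| + |Φ x i 1 * w t 1| + |Φ x i 2 * w t 2| := by
          have := abs_add_le (Φ x i 0 * w t 0) (Φ x i 1 * w t 1)
          linarith
      _ ≤ MΦ * Cw + MΦ * Cw + MΦ * Cw := by
          have := hb 0; have := hb 1; have := hb 2; linarith
      _ ≤ C := by rw [hCdef]; linarith
  -- Lipschitz bound for F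
  set Lf : ℝ := 3 * K * Cw with hLfdef
  have hLf0 : 0 ≤ Lf := by rw [hLfdef]; positivity
  have hFlip : ∀ t ∈ Icc (-1 : ℝ) 1, LipschitzOnWith Lf.toNNReal (F t) (closedBall x₀v R) := by
    intro t ht
    rw [lipschitzOnWith_iff_dist_le_mul]
    intro x hx y hy
    rw [Real.coe_toNNReal _ hLf0]
    have hd0 : (0 : ℝ) ≤ dist x y := dist_nonneg
    rw [dist_pi_le_iff (by positivity)]
    intro i
    rw [hFeq t x, hFeq t y, Real.dist_eq, hmulVec_entry, hmulVec_entry]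
    have hb : ∀ j : Fin 3, |Φ x i j * w t j - Φ y i j * w t j| ≤ K * dist x y * Cw := by
      intro j
      rw [← sub_mul, abs_mul]
      exact mul_le_mul (hKlip x hx y hy i j) (hwj t ht j) (abs_nonneg _)
        (by positivity)
    have h01 := abs_add_le (Φ x i 0 * w t 0 - Φ y i 0 * w t 0)
      (Φ x i 1 * w t 1 - Φ y i 1 * w t 1)
    have h012 := abs_add_le (Φ x i 0 * w t 0 - Φ y i 0 * w t 0
      + (Φ x i 1 * w t 1 - Φ y i 1 * w t 1)) (Φ x i 2 * w t 2 - Φ y i 2 * w t 2)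
    have hb0 := hb 0; have hb1 := hb 1; have hb2 := hb 2
    have hgoal : |Φ x i 0 * w t 0 + Φ x i 1 * w t 1 + Φ x i 2 * w t 2
        - (Φ y i 0 * w t 0 + Φ y i 1 * w t 1 + Φ y i 2 * w t 2)|
        = |Φ x i 0 * w t 0 - Φ y i 0 * w t 0 + (Φ x i 1 * w t 1 - Φ y i 1 * w t 1)
          + (Φ x i 2 * w t 2 - Φ y i 2 * w t 2)| := by ring_nf
    rw [hgoal, hLfdef]
    nlinarith
  -- choice of ε
  set ε : ℝ := min 1 (R / C) with hεdef
  have hε0 : 0 < ε := lt_min one_pos (div_pos hR0 hC0)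
  have hε1 : ε ≤ 1 := min_le_left _ _
  have hεC : ε * C ≤ R := by
    have h1 : ε ≤ R / C := min_le_right _ _
    calc ε * C ≤ (R / C) * C := mul_le_mul_of_nonneg_right h1 hC0.le
      _ = R := div_mul_cancel₀ R hC0.ne'
  have hIccsub : Icc (-ε) ε ⊆ Icc (-1 : ℝ) 1 := by
    intro t ht
    exact ⟨by linarith [ht.1], by linarith [ht.2]⟩
  -- Picard–Lindelöf
  have hpl : IsPicardLindelof F (tmin := -ε) (tmax := ε) ⟨0, by constructor <;> linarith⟩ x₀v
      R.toNNReal 0 C.toNNReal Lf.toNNReal :=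
    { lipschitzOnWith := fun t ht => by
        rw [Real.coe_toNNReal _ hR0.le]; exact hFlip t (hIccsub ht)
      continuousOn := by
        intro x hx
        have hFx : (fun t => F t x) = fun t => (Φ x).mulVec (w t) := funext fun t => hFeq t x
        rw [hFx]
        apply Continuous.continuousOn
        apply continuous_pi
        intro i
        have h2 : (fun t => (Φ x).mulVec (w t) i)
            = fun t => Φ x i 0 * w t 0 + Φ x i 1 * w t 1 + Φ x i 2 * w t 2 :=
          funext fun t => hmulVec_entry _ _ _
        rw [h2]
        exact ((continuous_const.mul ((continuous_apply (0 : Fin 3)).comp hw_cont)).add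
          (continuous_const.mul ((continuous_apply (1 : Fin 3)).comp hw_cont))).add
          (continuous_const.mul ((continuous_apply (2 : Fin 3)).comp hw_cont))
      norm_le := fun t ht x hx => by
        rw [Real.coe_toNNReal _ hC0.le]
        rw [Real.coe_toNNReal _ hR0.le] at hx
        exact hFnorm t (hIccsub ht) x hx
      mul_max_le := by
        show (C.toNNReal : ℝ) * max (ε - 0) (0 - -ε) ≤ (R.toNNReal : ℝ) - ((0 : NNReal) : ℝ)
        rw [Real.coe_toNNReal _ hC0.le, Real.coe_toNNReal _ hR0.le, NNReal.coe_zero]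
        have : max (ε - 0) (0 - -ε) = ε := by
          rw [sub_zero, zero_sub, neg_neg, max_self]
        rw [this, sub_zero]
        linarith [hεC] }
  obtain ⟨f, hf0, hfderiv⟩ := hpl.exists_eq_forall_mem_Icc_hasDerivWithinAt₀
  have hFb' : ∀ t ∈ Ioo (-ε) ε, ∀ x ∈ closedBall x₀v R, ‖F t x‖ ≤ C := fun t ht x hx =>
    hFnorm t (hIccsub (Ioo_subset_Icc_self ht)) x hx
  refine ⟨ε, hε0, ⟨f, hf0, fun t ht => ?_⟩, ?_⟩
  · exact (hfderiv t (Ioo_subset_Icc_self ht)).hasDerivAt (Icc_mem_nhds ht.1 ht.2)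
  · intro f1 g1 hf1 hg1 hf1' hg1'
    have hconf1 := confine hC0.le hR0 hε0 hεC hFb' hf1 hf1'
    have hconf2 := confine hC0.le hR0 hε0 hεC hFb' hg1 hg1'
    set s : ℝ → Set (Fin 3 → ℝ) :=
      fun t => if t ∈ Ioo (-ε) ε then closedBall x₀v R else (∅ : Set (Fin 3 → ℝ)) with hsdef
    have hv : ∀ t, LipschitzOnWith Lf.toNNReal (F t) (s t) := by
      intro t
      by_cases h : t ∈ Ioo (-ε) ε
      · rw [hsdef]; simp only [if_pos h]
        exact hFlip t (hIccsub (Ioo_subset_Icc_self h))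
      · rw [hsdef]; simp only [if_neg h]
        exact lipschitzOnWith_empty _ _
    have hmem : ∀ t ∈ Ioo (-ε) ε, ∀ {h : ℝ → Fin 3 → ℝ},
        (∀ u ∈ Ioo (-ε) ε, h u ∈ closedBall x₀v R) → h t ∈ s t := by
      intro t ht h hh
      rw [hsdef]; simp only [if_pos ht]
      exact hh t ht
    exact ODE_solution_unique_of_mem_Ioo (fun t _ => hv t) ⟨by linarith, hε0⟩
      (fun t ht => ⟨hf1' t ht, hmem t ht hconf1⟩)
      (fun t ht => ⟨hg1' t ht, hmem t ht hconf2⟩)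
      (by rw [hf1, hg1])
end

section
/- Let z : ℝ → ℂ be a C² curve with |z'(s)| = 1, parametrized so that i z''(s) = −|z''(s)| z'(s) for all s (counterclockwise orientation of the boundary of a convex body). Let s(t), r(t) be differentiable with r(t) ≥ 0, and let c(t) = z(s(t)) − i r(t) z'(s(t)). Then the curve t ↦ z(s(t)) (the projection of c onto the boundary) is differentiable and | d/dt z(s(t)) | = |ċ_∥(t)| / (1 + r(t) |z''(s(t))|), where ċ_∥ = Re( ċ(t) conj(z'(s(t))) ) is the component of ċ along z'. -/
/-- For a `C²` unit-speed counterclockwise boundary curve `z` (so that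
`i z'' = −|z''| z'`), `r(t) ≥ 0`, and `c(t) = z(s(t)) − i r(t) z'(s(t))`, the projection
curve `t ↦ z(s(t))` is differentiable with
`|d/dt z(s(t))| = |ċ_∥| / (1 + r |z''|)`, where `ċ_∥ = Re(ċ ⋅ conj z')`. -/
theorem projection_speed_formula
    (z : ℝ → ℂ) (hz : ContDiff ℝ 2 z)
    (hunit : ∀ u : ℝ, ‖deriv z u‖ = 1)
    (horient : ∀ u : ℝ,
      Complex.I * deriv (deriv z) u
        = -(‖deriv (deriv z) u‖ : ℂ) * deriv z u)
    (s r : ℝ → ℝ) (hs : Differentiable ℝ s) (hr : Differentiable ℝ r)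
    (hrpos : ∀ t, 0 ≤ r t)
    (c : ℝ → ℂ)
    (hc : ∀ t, c t = z (s t) - Complex.I * (r t : ℂ) * deriv z (s t)) :
    Differentiable ℝ (fun t => z (s t)) ∧
    ∀ t, ‖deriv (fun τ => z (s τ)) t‖
        = |(deriv c t * starRingEnd ℂ (deriv z (s t))).re|
            / (1 + r t * ‖deriv (deriv z) (s t)‖) := by
  have h1 : Differentiable ℝ z := hz.differentiable (by norm_num)
  have h2 : Differentiable ℝ (deriv z) := by
    have := (contDiff_succ_iff_deriv.mp (show ContDiff ℝ ((1:ℕ)+1) z by exact_mod_cast hz)).2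
    exact this.2.differentiable (by norm_num)
  refine ⟨h1.comp hs, fun t => ?_⟩
  set w := deriv z (s t) with hw
  set k : ℝ := ‖deriv (deriv z) (s t)‖ with hk
  have hkpos : 0 ≤ k := norm_nonneg _
  set st' := deriv s t with hst'
  set rt' := deriv r t with hrt'
  have hs' : HasDerivAt s st' t := (hs t).hasDerivAt
  have hr' : HasDerivAt r rt' t := (hr t).hasDerivAt
  have hza : HasDerivAt z w (s t) := (h1 (s t)).hasDerivAt
  have hzs : HasDerivAt (fun τ => z (s τ)) (st' • w) t := hza.scomp t hs'
  -- speed of the projection curve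
  have hD : deriv (fun τ => z (s τ)) t = (st' : ℂ) * w := by
    rw [hzs.deriv, Complex.real_smul]
  -- second derivative fact
  have hzz : deriv (deriv z) (s t) = Complex.I * (k : ℂ) * w := by
    have h := horient (s t)
    rw [← hw, ← hk] at h
    linear_combination (-Complex.I) * h + deriv (deriv z) (s t) * Complex.I_sq
  -- derivative of c
  have hzd : HasDerivAt (deriv z) (Complex.I * (k : ℂ) * w) (s t) := by
    rw [← hzz]; exact (h2 (s t)).hasDerivAt
  have hzs2 : HasDerivAt (fun τ => deriv z (s τ)) (st' • (Complex.I * (k : ℂ) * w)) t :=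
    hzd.scomp t hs'
  have hrC : HasDerivAt (fun τ => ((r τ : ℝ) : ℂ)) ((rt' : ℝ) : ℂ) t := hr'.ofReal_comp
  have hprod : HasDerivAt (fun τ => ((r τ : ℝ) : ℂ) * deriv z (s τ))
      ((rt' : ℂ) * w + ((r t : ℝ) : ℂ) * (st' • (Complex.I * (k : ℂ) * w))) t := by
    have := hrC.mul hzs2
    rw [hw]; exact this
  have hcd : HasDerivAt c
      (st' • w - Complex.I * ((rt' : ℂ) * w + ((r t : ℝ) : ℂ) * (st' • (Complex.I * (k : ℂ) * w)))) t := by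
    have hceq : c = fun τ => z (s τ) - Complex.I * (((r τ : ℝ) : ℂ) * deriv z (s τ)) := by
      funext τ; rw [hc τ, mul_assoc]
    rw [hceq]
    exact hzs.sub (hprod.const_mul Complex.I)
  have hww : w * starRingEnd ℂ w = 1 := by
    have habsw : ‖w‖ = 1 := hunit (s t)
    rw [Complex.mul_conj]
    norm_cast
    rw [Complex.normSq_eq_norm_sq, habsw]
    norm_num
  have key : (deriv c t * starRingEnd ℂ w).re = st' * (1 + r t * k) := by
    rw [hcd.deriv]
    have : (st' • w - Complex.I * ((rt' : ℂ) * w + ((r t : ℝ) : ℂ) * (st' • (Complex.I * (k : ℂ) * w)))) * starRingEnd ℂ w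
        = ((st' * (1 + r t * k) : ℝ) : ℂ) - Complex.I * rt' := by
      rw [Complex.real_smul, Complex.real_smul]
      push_cast
      linear_combination ((st' : ℂ) * (1 + (r t : ℂ) * k) - Complex.I * rt') * hww
        + ((r t : ℂ) * st' * k * w * starRingEnd ℂ w - (r t : ℂ) * st' * k
            + (st' : ℂ) * (r t : ℂ) * k * (1 - 2 * (w * starRingEnd ℂ w))) * Complex.I_sq
    rw [this]
    simp
  have hden : 0 < 1 + r t * k := by nlinarith [mul_nonneg (hrpos t) hkpos]
  have habsw : ‖w‖ = 1 := hunit (s t)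
  rw [hD, key, norm_mul, Complex.norm_real, Real.norm_eq_abs, habsw, mul_one,
    abs_mul, abs_of_pos hden, mul_div_assoc, div_self (ne_of_gt hden), mul_one]
end

section
/- Let K ⊆ ℝⁿ be a nonempty closed convex set with metric projection Π, let x ∉ K, θ = (x − Π(x))/‖x − Π(x)‖, and v ∈ ℝⁿ. Then, as t → 0⁺, ‖x + t v − Π(x + t v)‖ − ‖x − Π(x + t v)‖ = t θ · v + t ( (Π(x) − Π(x + t v)) / ‖x − Π(x)‖ ) · v + o(t). -/
open scoped RealInnerProductSpace

private lemma aux_norm_expand {E : Type*} [NormedAddCommGroup E] [InnerProductSpace ℝ E]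
    (a b : E) (ha : 0 < ‖a‖) (hb : ‖b‖ ≤ ‖a‖ / 2) :
    |‖a + b‖ - (‖a‖ + ⟪a, b⟫ / ‖a‖)| ≤ ‖b‖ ^ 2 / ‖a‖ := by
  set s := ‖a‖ with hs
  set u := ‖a + b‖ with hu
  set I : ℝ := ⟪a, b⟫ with hI
  have hcs : |I| ≤ s * ‖b‖ := abs_real_inner_le_norm a b
  have hu_lb : s - ‖b‖ ≤ u := by
    have h := norm_sub_norm_le a (a + b)
    have : a - (a + b) = -b := by abel
    rw [this, norm_neg] at h
    linarith
  have hs0 : s ≠ 0 := ne_of_gt ha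
  have hJle : |I / s| ≤ ‖b‖ := by
    rw [abs_div, abs_of_pos ha, div_le_iff₀ ha]
    calc |I| ≤ s * ‖b‖ := hcs
      _ = ‖b‖ * s := by ring
  have hc_lb : s / 2 ≤ s + I / s := by
    have : -(‖b‖) ≤ I / s := by
      have := neg_abs_le (I / s)
      linarith [hJle, neg_abs_le (I / s), abs_nonneg (I / s),
        (neg_le_neg hJle : -(‖b‖) ≤ -|I / s|)]
    linarith
  have hsum : s ≤ u + (s + I / s) := by linarith
  have hkey : s * (I / s) = I := mul_div_cancel₀ _ hs0
  have h1 : u ^ 2 = s ^ 2 + 2 * I + ‖b‖ ^ 2 := norm_add_sq_real a b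
  have h2 : (s + I / s) ^ 2 = s ^ 2 + 2 * (s * (I / s)) + (I / s) ^ 2 := by ring
  rw [hkey] at h2
  have hsq : u ^ 2 - (s + I / s) ^ 2 = ‖b‖ ^ 2 - (I / s) ^ 2 := by linarith
  have hsqb : |u ^ 2 - (s + I / s) ^ 2| ≤ ‖b‖ ^ 2 := by
    rw [hsq, abs_le]
    constructor
    · nlinarith [sq_nonneg (‖b‖), sq_abs (I / s), hJle, abs_nonneg (I / s), norm_nonneg b]
    · nlinarith [sq_abs (I / s), abs_nonneg (I / s)]
  have hgoal : |u - (s + I / s)| ≤ ‖b‖ ^ 2 / s := by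
    rw [le_div_iff₀ ha]
    calc |u - (s + I / s)| * s ≤ |u - (s + I / s)| * (u + (s + I / s)) := by
          apply mul_le_mul_of_nonneg_left hsum (abs_nonneg _)
      _ = |u ^ 2 - (s + I / s) ^ 2| := by
          rw [← abs_of_nonneg (show (0:ℝ) ≤ u + (s + I / s) by linarith), ← abs_mul]
          congr 1; ring
      _ ≤ ‖b‖ ^ 2 := hsqb
  calc |u - (s + I / s)| ≤ ‖b‖ ^ 2 / s := hgoal

/-- For `x ∉ K` with projection `Π` and `θ = (x − Π x)/‖x − Π x‖`, as `t → 0⁺`: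
`‖x + tv − Π(x + tv)‖ − ‖x − Π(x + tv)‖
   = t ⟪θ, v⟫ + t ⟪(Π x − Π(x + tv))/‖x − Π x‖, v⟫ + o(t)`. -/
theorem dist_to_moving_projection_expansion {n : ℕ}
    (K : Set (EuclideanSpace ℝ (Fin n)))
    (hKne : K.Nonempty) (hKcl : IsClosed K) (hKconv : Convex ℝ K)
    (P : EuclideanSpace ℝ (Fin n) → EuclideanSpace ℝ (Fin n))
    (hPmem : ∀ x, P x ∈ K)
    (hPdist : ∀ x, dist x (P x) = Metric.infDist x K)
    (x : EuclideanSpace ℝ (Fin n)) (hx : x ∉ K)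
    (v : EuclideanSpace ℝ (Fin n)) :
    (fun t : ℝ =>
        ‖x + t • v - P (x + t • v)‖ - ‖x - P (x + t • v)‖
          - t * ⟪‖x - P x‖⁻¹ • (x - P x), v⟫
          - t * ⟪‖x - P x‖⁻¹ • (P x - P (x + t • v)), v⟫)
      =o[nhdsWithin 0 (Set.Ioi 0)] (fun t : ℝ => t) := by
  set d : ℝ := ‖x - P x‖ with hd_def
  have hd0 : 0 < d := by
    have h := (hKcl.notMem_iff_infDist_pos hKne).mp hx
    rw [← hPdist x, dist_eq_norm] at h
    exact h
  set ε : ℝ := d / (2 * (‖v‖ + 1)) with hε_def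
  have hε0 : 0 < ε := by positivity
  have hO : (fun t : ℝ =>
        ‖x + t • v - P (x + t • v)‖ - ‖x - P (x + t • v)‖
          - t * ⟪‖x - P x‖⁻¹ • (x - P x), v⟫
          - t * ⟪‖x - P x‖⁻¹ • (P x - P (x + t • v)), v⟫)
      =O[nhdsWithin 0 (Set.Ioi 0)] (fun t : ℝ => t ^ 2) := by
    rw [Asymptotics.isBigO_iff]
    refine ⟨3 * ‖v‖ ^ 2 / d, ?_⟩
    filter_upwards [Ioo_mem_nhdsGT_of_mem (show (0:ℝ) ∈ Set.Ico 0 ε from ⟨le_refl _, hε0⟩)]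
      with t ht
    obtain ⟨ht0, htε⟩ := ht
    set q := P (x + t • v) with hq_def
    have htv_norm : ‖t • v‖ = t * ‖v‖ := by
      rw [norm_smul, Real.norm_eq_abs, abs_of_pos ht0]
    have htv_half : t * ‖v‖ ≤ d / 2 := by
      have h := (lt_div_iff₀ (by positivity : (0:ℝ) < 2 * (‖v‖ + 1))).mp htε
      nlinarith [ht0.le, norm_nonneg v]
    -- lower bound on ‖x - q‖
    have hna_ge : d ≤ ‖x - q‖ := by
      calc d = dist x (P x) := (dist_eq_norm _ _).symm
        _ = Metric.infDist x K := hPdist x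
        _ ≤ dist x q := Metric.infDist_le_dist_of_mem (hPmem _)
        _ = ‖x - q‖ := dist_eq_norm _ _
    have hna0 : 0 < ‖x - q‖ := lt_of_lt_of_le hd0 hna_ge
    -- upper bound on ‖x - q‖
    have hna_le : ‖x - q‖ ≤ d + 2 * (t * ‖v‖) := by
      have h1 : dist x q ≤ dist x (x + t • v) + dist (x + t • v) q := dist_triangle _ _ _
      have h2 : dist (x + t • v) q = Metric.infDist (x + t • v) K := hPdist _
      have h3 : Metric.infDist (x + t • v) K ≤ dist (x + t • v) (P x) :=
        Metric.infDist_le_dist_of_mem (hPmem x)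
      have h4 : dist (x + t • v) (P x) ≤ dist (x + t • v) x + dist x (P x) := dist_triangle _ _ _
      have h5 : dist x (x + t • v) = t * ‖v‖ := by
        rw [dist_self_add_right, htv_norm]
      have h6 : dist (x + t • v) x = t * ‖v‖ := by rw [dist_comm, h5]
      have h7 : dist x (P x) = d := dist_eq_norm _ _
      rw [dist_eq_norm] at h1
      linarith
    have hb_half : ‖t • v‖ ≤ ‖x - q‖ / 2 := by
      rw [htv_norm]; linarith
    -- main expansion
    have haux := aux_norm_expand (x - q) (t • v) hna0 hb_half
    -- rewrite the linear terms
    have hinner : t * ⟪‖x - P x‖⁻¹ • (x - P x), v⟫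
        + t * ⟪‖x - P x‖⁻¹ • (P x - q), v⟫ = ⟪x - q, t • v⟫ / d := by
      rw [real_inner_smul_left, real_inner_smul_left, real_inner_smul_right]
      have hsum : ⟪x - P x, v⟫ + ⟪P x - q, v⟫ = ⟪x - q, v⟫ := by
        rw [← inner_add_left]
        congr 1
        abel
      rw [← hd_def, div_eq_mul_inv, ← hsum]
      ring
    have hx_eq : x + t • v - q = (x - q) + t • v := by abel
    set I : ℝ := ⟪x - q, t • v⟫ with hI_def
    have hF : ‖x + t • v - q‖ - ‖x - q‖
          - t * ⟪‖x - P x‖⁻¹ • (x - P x), v⟫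
          - t * ⟪‖x - P x‖⁻¹ • (P x - q), v⟫
        = (‖(x - q) + t • v‖ - (‖x - q‖ + I / ‖x - q‖))
          + (I / ‖x - q‖ - I / d) := by
      rw [hx_eq]
      linarith [hinner]
    -- bound first term
    have h1' : |‖(x - q) + t • v‖ - (‖x - q‖ + I / ‖x - q‖)| ≤ t ^ 2 * ‖v‖ ^ 2 / d := by
      calc |‖(x - q) + t • v‖ - (‖x - q‖ + I / ‖x - q‖)| ≤ ‖t • v‖ ^ 2 / ‖x - q‖ := haux
        _ ≤ ‖t • v‖ ^ 2 / d := by gcongr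
        _ = t ^ 2 * ‖v‖ ^ 2 / d := by rw [htv_norm]; ring
    -- bound second term
    have hIb : |I| ≤ ‖x - q‖ * (t * ‖v‖) := by
      calc |I| ≤ ‖x - q‖ * ‖t • v‖ := abs_real_inner_le_norm _ _
        _ = ‖x - q‖ * (t * ‖v‖) := by rw [htv_norm]
    have h2' : |I / ‖x - q‖ - I / d| ≤ 2 * t ^ 2 * ‖v‖ ^ 2 / d := by
      rw [← mul_le_mul_iff_of_pos_right (mul_pos hna0 hd0)]
      have hlhs : |I / ‖x - q‖ - I / d| * (‖x - q‖ * d) = |I| * (‖x - q‖ - d) := by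
        calc |I / ‖x - q‖ - I / d| * (‖x - q‖ * d)
            = |(I / ‖x - q‖ - I / d) * (‖x - q‖ * d)| := by
              rw [abs_mul, abs_of_nonneg (le_of_lt (mul_pos hna0 hd0))]
          _ = |I * (d - ‖x - q‖)| := by
              congr 1
              field_simp
          _ = |I| * (‖x - q‖ - d) := by
              rw [abs_mul, abs_sub_comm, abs_of_nonneg (sub_nonneg.mpr hna_ge)]
      rw [hlhs]
      have hrhs : 2 * t ^ 2 * ‖v‖ ^ 2 / d * (‖x - q‖ * d) = (‖x - q‖ * (t * ‖v‖)) * (2 * (t * ‖v‖)) := by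
        field_simp
      rw [hrhs]
      apply mul_le_mul hIb (by linarith) (by linarith) (by positivity)
    -- combine
    rw [Real.norm_eq_abs, Real.norm_eq_abs, abs_of_nonneg (sq_nonneg t)]
    calc |‖x + t • v - q‖ - ‖x - q‖
          - t * ⟪‖x - P x‖⁻¹ • (x - P x), v⟫
          - t * ⟪‖x - P x‖⁻¹ • (P x - q), v⟫|
        = |(‖(x - q) + t • v‖ - (‖x - q‖ + I / ‖x - q‖)) + (I / ‖x - q‖ - I / d)| := by
          rw [hF]
      _ ≤ |‖(x - q) + t • v‖ - (‖x - q‖ + I / ‖x - q‖)| + |I / ‖x - q‖ - I / d| := abs_add_le _ _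
      _ ≤ t ^ 2 * ‖v‖ ^ 2 / d + 2 * t ^ 2 * ‖v‖ ^ 2 / d := add_le_add h1' h2'
      _ = 3 * ‖v‖ ^ 2 / d * t ^ 2 := by ring
  have h2o : (fun t : ℝ => t ^ 2) =o[nhdsWithin 0 (Set.Ioi 0)] (fun t : ℝ => t) := by
    have h1 : (fun t : ℝ => t) =o[nhdsWithin 0 (Set.Ioi 0)] (fun _ : ℝ => (1:ℝ)) :=
      (Asymptotics.isLittleO_one_iff ℝ).mpr (Filter.Tendsto.mono_left Filter.tendsto_id nhdsWithin_le_nhds)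
    have := h1.mul_isBigO (Asymptotics.isBigO_refl (fun t : ℝ => t) (nhdsWithin 0 (Set.Ioi 0)))
    simpa [pow_two] using this
  exact hO.trans_isLittleO h2o
end

section
/- Let K ⊂ ℝ² be a compact convex polygon (the convex hull of a finite set of points) with nonempty interior, let Π be the metric projection onto K, and let c(t) = p + t w be a straight line with c(t) ∉ K for all t in an interval J. Then for every t₀ in the interior of J the one-sided derivative lim_{t→0⁺} (Π(c(t₀ + t)) − Π(c(t₀)))/t exists. -/
open Metric Set Filter
local notation "⟪" x ", " y "⟫_ℝ" => @inner ℝ _ _ x y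

/-- For a compact convex polygon `K ⊂ ℝ²` (convex hull of a finite set) with nonempty
interior, and a straight line `c(t) = p + t w` staying outside `K` on an interval `J`,
the one-sided derivative of `t ↦ Π(c(t))` exists at every interior point of `J`. -/
theorem polygon_projection_one_sided_deriv_exists
    (S : Set (EuclideanSpace ℝ (Fin 2))) (hSfin : S.Finite)
    (K : Set (EuclideanSpace ℝ (Fin 2))) (hK : K = convexHull ℝ S)
    (hKint : (interior K).Nonempty)
    (P : EuclideanSpace ℝ (Fin 2) → EuclideanSpace ℝ (Fin 2))
    (hP : ∀ y, P y ∈ K ∧ dist y (P y) = Metric.infDist y K)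
    (p w : EuclideanSpace ℝ (Fin 2))
    (J : Set ℝ) (hJ : J.OrdConnected)
    (hout : ∀ t ∈ J, p + t • w ∉ K)
    (t₀ : ℝ) (ht₀ : t₀ ∈ interior J) :
    ∃ L : EuclideanSpace ℝ (Fin 2),
      Filter.Tendsto
        (fun t : ℝ => t⁻¹ • (P (p + (t₀ + t) • w) - P (p + t₀ • w)))
        (nhdsWithin 0 (Set.Ioi 0)) (nhds L) := by
  classical
  have hKconv : Convex ℝ K := hK ▸ convex_convexHull ℝ S
  have hPK : ∀ y, P y ∈ K := fun y => (hP y).1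
  -- variational inequality for the projection
  have hvar : ∀ x, ∀ z ∈ K, ⟪x - P x, z - P x⟫_ℝ ≤ 0 := by
    intro x
    have h1 : ‖x - P x‖ = ⨅ z : K, ‖x - z‖ := by
      have h2 := (hP x).2
      rw [Metric.infDist_eq_iInf] at h2
      simp only [dist_eq_norm] at h2
      exact h2
    exact (norm_eq_iInf_iff_real_inner_le_zero hKconv (hPK x)).1 h1
  -- uniqueness: any point satisfying the variational inequality is the projection
  have huniq : ∀ x q, q ∈ K → (∀ z ∈ K, ⟪x - q, z - q⟫_ℝ ≤ 0) → P x = q := by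
    intro x q hqK hq
    have h1 := hvar x q hqK
    have h2 := hq (P x) (hPK x)
    have h3 : ⟪q - P x, q - P x⟫_ℝ ≤ 0 := by
      have e : ⟪q - P x, q - P x⟫_ℝ = ⟪x - P x, q - P x⟫_ℝ + ⟪x - q, P x - q⟫_ℝ := by
        simp only [inner_sub_left, inner_sub_right]; ring
      rw [e]; linarith
    have h4 := real_inner_self_nonpos.1 h3
    rw [sub_eq_zero] at h4
    exact h4.symm
  -- the Lipschitz property of the projection
  have hLip : ∀ x y, ‖P x - P y‖ ≤ ‖x - y‖ := by
    intro x y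
    have h1 := hvar x (P y) (hPK y)
    have h2 := hvar y (P x) (hPK x)
    have e1 : ⟪x - y, P x - P y⟫_ℝ = ⟪P x - P y, P x - P y⟫_ℝ
        + (- ⟪x - P x, P y - P x⟫_ℝ) + (- ⟪y - P y, P x - P y⟫_ℝ) := by
      simp only [inner_sub_left, inner_sub_right]; ring
    have h3 : ‖P x - P y‖ ^ 2 ≤ ⟪x - y, P x - P y⟫_ℝ := by
      rw [e1, ← real_inner_self_eq_norm_sq]; linarith
    have h4 := real_inner_le_norm (x - y) (P x - P y)
    rcases eq_or_lt_of_le (norm_nonneg (P x - P y)) with h0 | h0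
    · rw [← h0]; exact norm_nonneg _
    · have h5 : ‖P x - P y‖ * ‖P x - P y‖ ≤ ‖x - y‖ * ‖P x - P y‖ := by nlinarith
      exact le_of_mul_le_mul_right h5 h0
  set t : Finset (EuclideanSpace ℝ (Fin 2)) := hSfin.toFinset with htdef
  have hKt : K = convexHull ℝ (t : Set (EuclideanSpace ℝ (Fin 2))) := by
    rw [hK, htdef, hSfin.coe_toFinset]
  set c : ℝ → EuclideanSpace ℝ (Fin 2) := fun s => p + (t₀ + s) • w with hcdef
  set φ : ℝ → EuclideanSpace ℝ (Fin 2) := fun s => P (c s) with hφdef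
  set T : ℝ → Finset (EuclideanSpace ℝ (Fin 2)) :=
    fun s => t.filter (fun a => ⟪c s - φ s, a - φ s⟫_ℝ = 0) with hTdef
  have hTsub : ∀ s, T s ⊆ t := by
    intro s; rw [hTdef]; exact Finset.filter_subset _ _
  -- the projection lies in the hull of the active set
  have hmemT : ∀ s, φ s ∈ convexHull ℝ ((T s : Set (EuclideanSpace ℝ (Fin 2)))) := by
    intro s
    have h0 : φ s ∈ convexHull ℝ (t : Set (EuclideanSpace ℝ (Fin 2))) := hKt ▸ hPK (c s)
    rw [Finset.mem_convexHull'] at h0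
    obtain ⟨wt, hw0, hw1, hws⟩ := h0
    have hzero_vec : ∑ a ∈ t, wt a • (a - φ s) = (0 : EuclideanSpace ℝ (Fin 2)) := by
      have e : ∑ a ∈ t, wt a • (a - φ s)
          = (∑ a ∈ t, wt a • a) - (∑ a ∈ t, wt a) • φ s := by
        rw [Finset.sum_smul]
        simp [smul_sub, Finset.sum_sub_distrib]
      rw [e, hws, hw1, one_smul, sub_self]
    have hsum : ∑ a ∈ t, wt a * ⟪c s - φ s, a - φ s⟫_ℝ = 0 := by
      calc ∑ a ∈ t, wt a * ⟪c s - φ s, a - φ s⟫_ℝ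
          = ∑ a ∈ t, ⟪c s - φ s, wt a • (a - φ s)⟫_ℝ := by
            refine Finset.sum_congr rfl fun a _ => ?_
            rw [real_inner_smul_right]
        _ = ⟪c s - φ s, ∑ a ∈ t, wt a • (a - φ s)⟫_ℝ := (inner_sum t _ _).symm
        _ = 0 := by rw [hzero_vec, inner_zero_right]
    have hterm : ∀ a ∈ t, wt a * ⟪c s - φ s, a - φ s⟫_ℝ = 0 := by
      have hnp : ∀ a ∈ t, wt a * ⟪c s - φ s, a - φ s⟫_ℝ ≤ 0 := fun b hb =>
        mul_nonpos_of_nonneg_of_nonpos (hw0 b hb)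
          (hvar (c s) b (by rw [hKt]; exact subset_convexHull ℝ _ hb))
      exact fun a ha => (Finset.sum_eq_zero_iff_of_nonpos hnp).1 hsum a ha
    have hzero : ∀ a ∈ t, a ∉ T s → wt a = 0 := by
      intro a ha hna
      rcases mul_eq_zero.1 (hterm a ha) with h | h
      · exact h
      · exact absurd (by rw [hTdef]; exact Finset.mem_filter.2 ⟨ha, h⟩) hna
    rw [Finset.mem_convexHull']
    refine ⟨wt, fun a ha => hw0 a (hTsub s ha), ?_, ?_⟩
    · rw [← hw1]
      exact Finset.sum_subset (hTsub s) (fun a ha hna => hzero a ha hna)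
    · rw [← hws]
      exact Finset.sum_subset (hTsub s) (fun a ha hna => by rw [hzero a ha hna, zero_smul])
  -- the supporting functional is constant on the hull of the active set
  have hplane : ∀ s z, z ∈ convexHull ℝ ((T s : Set (EuclideanSpace ℝ (Fin 2)))) →
      ⟪c s - φ s, z - φ s⟫_ℝ = 0 := by
    intro s z hz
    have hsub : (T s : Set (EuclideanSpace ℝ (Fin 2)))
        ⊆ {y | ⟪c s - φ s, y⟫_ℝ = ⟪c s - φ s, φ s⟫_ℝ} := by
      intro a ha
      rw [Finset.mem_coe, hTdef] at ha
      have h := (Finset.mem_filter.1 ha).2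
      rw [inner_sub_right, sub_eq_zero] at h
      exact h
    have hcv : Convex ℝ {y | ⟪c s - φ s, y⟫_ℝ = ⟪c s - φ s, φ s⟫_ℝ} := by
      intro y₁ h₁ y₂ h₂ a b ha hb hab
      simp only [Set.mem_setOf_eq, inner_add_right, real_inner_smul_right] at *
      rw [h₁, h₂]
      linear_combination (⟪c s - φ s, φ s⟫_ℝ) * hab
    have h := convexHull_min hsub hcv hz
    rw [Set.mem_setOf_eq] at h
    rw [inner_sub_right, h, sub_self]
  -- key affinity lemma
  have key : ∀ s₁ s₂ τ : ℝ, s₁ < s₂ → T s₁ = T s₂ → s₁ ≤ τ → τ ≤ s₂ →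
      φ τ = ((s₂ - τ)/(s₂ - s₁)) • φ s₁ + ((τ - s₁)/(s₂ - s₁)) • φ s₂ := by
    intro s₁ s₂ τ hlt hTeq hle1 hle2
    have hd : (0:ℝ) < s₂ - s₁ := by linarith
    obtain ⟨a, hadef⟩ : ∃ a : ℝ, a = (s₂ - τ)/(s₂ - s₁) := ⟨_, rfl⟩
    obtain ⟨b, hbdef⟩ : ∃ b : ℝ, b = (τ - s₁)/(s₂ - s₁) := ⟨_, rfl⟩
    have ha : 0 ≤ a := hadef ▸ div_nonneg (by linarith) hd.le
    have hb : 0 ≤ b := hbdef ▸ div_nonneg (by linarith) hd.le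
    have hab : a + b = 1 := by rw [hadef, hbdef]; field_simp; ring
    have hτ : a * s₁ + b * s₂ = τ := by rw [hadef, hbdef]; field_simp; ring
    have hq : a • φ s₁ + b • φ s₂ ∈ K := hKconv (hPK _) (hPK _) ha hb hab
    have hcomb : c τ = a • c s₁ + b • c s₂ := by
      rw [hcdef]
      match_scalars
      · first
        | linear_combination hab
        | linear_combination -hab
      · first
        | linear_combination t₀ * hab + hτ
        | linear_combination (-t₀) * hab - hτ
        | linear_combination t₀ * hab - hτ
        | linear_combination (-t₀) * hab + hτ
    have hxc : c τ - (a • φ s₁ + b • φ s₂) = a • (c s₁ - φ s₁) + b • (c s₂ - φ s₂) := by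
      rw [hcomb]; module
    have hz' : ∀ z ∈ K, ⟪c τ - (a • φ s₁ + b • φ s₂), z - (a • φ s₁ + b • φ s₂)⟫_ℝ ≤ 0 := by
      intro z hz
      have C₁ : ⟪c s₁ - φ s₁, φ s₂ - φ s₁⟫_ℝ = 0 :=
        hplane s₁ (φ s₂) (by rw [hTeq]; exact hmemT s₂)
      have C₂ : ⟪c s₂ - φ s₂, φ s₁ - φ s₂⟫_ℝ = 0 :=
        hplane s₂ (φ s₁) (by rw [← hTeq]; exact hmemT s₁)
      have A := hvar (c s₁) z hz
      have B := hvar (c s₂) z hz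
      have e1 : ⟪c s₁ - φ s₁, z - (a • φ s₁ + b • φ s₂)⟫_ℝ
          = ⟪c s₁ - φ s₁, z - φ s₁⟫_ℝ + b * ⟪c s₁ - φ s₁, φ s₁ - φ s₂⟫_ℝ := by
        simp only [inner_sub_right, inner_add_right, real_inner_smul_right]
        linear_combination (-(⟪c s₁ - φ s₁, φ s₁⟫_ℝ)) * hab
      have e2 : ⟪c s₂ - φ s₂, z - (a • φ s₁ + b • φ s₂)⟫_ℝ
          = ⟪c s₂ - φ s₂, z - φ s₂⟫_ℝ + a * ⟪c s₂ - φ s₂, φ s₂ - φ s₁⟫_ℝ := by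
        simp only [inner_sub_right, inner_add_right, real_inner_smul_right]
        linear_combination (-(⟪c s₂ - φ s₂, φ s₂⟫_ℝ)) * hab
      have C₁' : ⟪c s₁ - φ s₁, φ s₁ - φ s₂⟫_ℝ = 0 := by
        rw [← neg_sub (φ s₂) (φ s₁), inner_neg_right, C₁, neg_zero]
      have C₂' : ⟪c s₂ - φ s₂, φ s₂ - φ s₁⟫_ℝ = 0 := by
        rw [← neg_sub (φ s₁) (φ s₂), inner_neg_right, C₂, neg_zero]
      have etot : ⟪c τ - (a • φ s₁ + b • φ s₂), z - (a • φ s₁ + b • φ s₂)⟫_ℝ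
          = a * ⟪c s₁ - φ s₁, z - (a • φ s₁ + b • φ s₂)⟫_ℝ
            + b * ⟪c s₂ - φ s₂, z - (a • φ s₁ + b • φ s₂)⟫_ℝ := by
        rw [hxc, inner_add_left, real_inner_smul_left, real_inner_smul_left]
      rw [etot, e1, e2, C₁', C₂', mul_zero, add_zero, mul_zero, add_zero]
      have p1 : a * ⟪c s₁ - φ s₁, z - φ s₁⟫_ℝ ≤ 0 := mul_nonpos_of_nonneg_of_nonpos ha A
      have p2 : b * ⟪c s₂ - φ s₂, z - φ s₂⟫_ℝ ≤ 0 := mul_nonpos_of_nonneg_of_nonpos hb B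
      linarith
    have hfin := huniq (c τ) _ hq hz'
    rw [hadef, hbdef] at hfin
    exact hfin
  -- pigeonhole: a pattern occurring at parameters accumulating at 0⁺
  have hf : ∀ n : ℕ, T (1/(n+1)) ∈ t.powerset := fun n => Finset.mem_powerset.2 (hTsub _)
  obtain ⟨T₀, hT₀⟩ :=
    Finite.exists_infinite_fiber (fun n : ℕ => (⟨T (1/(n+1)), hf n⟩ : ↥(t.powerset)))
  have hinf : ((fun n : ℕ => (⟨T (1/(n+1)), hf n⟩ : ↥(t.powerset))) ⁻¹' {T₀}).Infinite :=
    Set.infinite_coe_iff.1 hT₀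
  have hacc : ∀ ε : ℝ, 0 < ε → ∃ s : ℝ, 0 < s ∧ s < ε ∧ T s = (T₀ : Finset _) := by
    intro ε hε
    obtain ⟨n, hn, hn'⟩ := hinf.exists_gt ⌈ε⁻¹⌉₊
    have hvals : T (1/(n+1)) = (T₀ : Finset _) := by
      have := hn
      simp only [Set.mem_preimage, Set.mem_singleton_iff] at this
      exact congrArg Subtype.val this
    refine ⟨1/(n+1), by positivity, ?_, hvals⟩
    have h1 : (ε⁻¹ : ℝ) < n + 1 := by
      have h2 : ε⁻¹ ≤ (⌈ε⁻¹⌉₊ : ℝ) := Nat.le_ceil _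
      have h3 : ((⌈ε⁻¹⌉₊ : ℕ) : ℝ) < n + 1 := by exact_mod_cast Nat.lt_succ_of_lt hn'
      linarith
    rw [div_lt_iff₀ (by positivity)]
    calc (1:ℝ) = ε * ε⁻¹ := (mul_inv_cancel₀ hε.ne').symm
      _ < ε * (n+1) := by
          exact mul_lt_mul_of_pos_left h1 hε
  obtain ⟨s₂, hs₂0, _, hs₂T⟩ := hacc 1 one_pos
  obtain ⟨s₁, hs₁0, hs₁lt, hs₁T⟩ := hacc s₂ hs₂0
  set v := (s₂ - s₁)⁻¹ • (φ s₂ - φ s₁) with hvdef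
  have key2 : ∀ s τ : ℝ, s < s₂ → T s = (T₀ : Finset _) → s ≤ τ → τ ≤ s₂ →
      φ τ = φ s₂ + ((τ - s₂)/(s₂ - s)) • (φ s₂ - φ s) := by
    intro s τ hlt hTs hle1 hle2
    have h := key s s₂ τ hlt (by rw [hTs, hs₂T]) hle1 hle2
    have hne : s₂ - s ≠ 0 := sub_ne_zero.2 hlt.ne'
    rw [h]
    match_scalars <;> (field_simp [hne]; try ring)
  have hvs : ∀ s, 0 < s → s < s₁ → T s = (T₀ : Finset _) →
      v = (s₂ - s)⁻¹ • (φ s₂ - φ s) := by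
    intro s hs0 hs1 hTs
    have h := key2 s s₁ (lt_trans hs1 hs₁lt) hTs hs1.le hs₁lt.le
    have hne1 : s₂ - s₁ ≠ 0 := sub_ne_zero.2 hs₁lt.ne'
    have hne2 : s₂ - s ≠ 0 := sub_ne_zero.2 (lt_trans hs1 hs₁lt).ne'
    rw [hvdef, h]
    match_scalars <;> (field_simp [hne1, hne2]; try ring)
  have main : ∀ τ, 0 < τ → τ < s₁ → φ τ = φ s₂ + (τ - s₂) • v := by
    intro τ hτ0 hτ1
    obtain ⟨s, hs0, hslt, hsT⟩ := hacc τ hτ0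
    have hss₁ : s < s₁ := lt_trans hslt hτ1
    have h := key2 s τ (lt_trans hss₁ hs₁lt) hsT hslt.le (le_trans hτ1.le hs₁lt.le)
    rw [h, hvs s hs0 hss₁ hsT, smul_smul, div_eq_mul_inv]
  -- continuity at 0
  have hccont : ∀ τ : ℝ, ‖φ τ - φ 0‖ ≤ |τ| * ‖w‖ := by
    intro τ
    have h := hLip (c τ) (c 0)
    have e : c τ - c 0 = τ • w := by rw [hcdef]; module
    calc ‖φ τ - φ 0‖ ≤ ‖c τ - c 0‖ := h
      _ = |τ| * ‖w‖ := by rw [e, norm_smul, Real.norm_eq_abs]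
  have hφ0 : φ 0 = φ s₂ - s₂ • v := by
    have hbound : ∀ τ : ℝ, 0 < τ → τ < s₁ →
        ‖(φ s₂ - s₂ • v) - φ 0‖ ≤ τ * (‖w‖ + ‖v‖) := by
      intro τ h0τ h1
      have hm := main τ h0τ h1
      have e : (φ s₂ - s₂ • v) - φ 0 = (φ τ - φ 0) - τ • v := by rw [hm]; module
      rw [e]
      calc ‖(φ τ - φ 0) - τ • v‖ ≤ ‖φ τ - φ 0‖ + ‖τ • v‖ := norm_sub_le _ _
        _ ≤ |τ| * ‖w‖ + |τ| * ‖v‖ := by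
            rw [norm_smul, Real.norm_eq_abs]
            linarith [hccont τ]
        _ = τ * (‖w‖ + ‖v‖) := by rw [abs_of_pos h0τ]; ring
    have h0 : ‖(φ s₂ - s₂ • v) - φ 0‖ ≤ 0 := by
      have htend : Filter.Tendsto (fun τ : ℝ => τ * (‖w‖ + ‖v‖))
          (nhdsWithin 0 (Set.Ioi 0)) (nhds 0) := by
        have h := ((continuous_mul_right (‖w‖ + ‖v‖)).tendsto (0:ℝ)).mono_left
          (nhdsWithin_le_nhds (s := Set.Ioi (0:ℝ)))
        simpa using h
      refine ge_of_tendsto htend ?_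
      filter_upwards [Ioo_mem_nhdsGT_of_mem (⟨le_refl (0:ℝ), hs₁0⟩ : (0:ℝ) ∈ Set.Ico 0 s₁)]
        with τ hτ
      exact hbound τ hτ.1 hτ.2
    have h1 := norm_le_zero_iff.1 h0
    rw [sub_eq_zero] at h1
    exact h1.symm
  refine ⟨v, ?_⟩
  have heq : (fun τ : ℝ => τ⁻¹ • (P (p + (t₀ + τ) • w) - P (p + t₀ • w)))
      =ᶠ[nhdsWithin 0 (Set.Ioi 0)] (fun _ => v) := by
    filter_upwards [Ioo_mem_nhdsGT_of_mem (⟨le_refl (0:ℝ), hs₁0⟩ : (0:ℝ) ∈ Set.Ico 0 s₁)]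
      with τ hτ
    have h1 : P (p + (t₀ + τ) • w) = φ τ := rfl
    have h2 : P (p + t₀ • w) = φ 0 := by rw [hφdef, hcdef]; simp
    rw [h1, h2, main τ hτ.1 hτ.2, hφ0,
      show (φ s₂ + (τ - s₂) • v) - (φ s₂ - s₂ • v) = τ • v by module,
      smul_smul, inv_mul_cancel₀ (ne_of_gt hτ.1), one_smul]
  exact Filter.Tendsto.congr' heq.symm tendsto_const_nhds
end

section
/- Fix λ ∈ (0, 1) and C > 0 with Cλ ≤ π, and set α_n = Cλⁿ and A_n = e^{i α_n} ∈ ℂ for n ≥ 1. Let T_n be the midpoint of the segment [A_n, A_{n+1}], and let S_n be the point on the segment [A_{n−1}, A_n] with ‖A_n − S_n‖ = ‖A_n − T_n‖. Let r_n > 0 be the common value ‖O_n − S_n‖ = ‖O_n − T_n‖, where O_n is the (unique) point satisfying (O_n − S_n) ⟂ (A_n − A_{n−1}) and (O_n − T_n) ⟂ (A_{n+1} − A_n) (the center of the circle tangent to the segment [A_{n−1}, A_n] at S_n and to the segment [A_n, A_{n+1}] at T_n). Then lim_{n→∞} r_n exists and equals 2λ/(1 + λ). -/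
open Real Complex Filter

lemma exp_sub_exp' (m d : ℝ) :
    Complex.exp (((m+d : ℝ))*Complex.I) - Complex.exp (((m-d : ℝ))*Complex.I)
      = 2 * Real.sin d * Complex.I * Complex.exp ((m:ℝ)*Complex.I) := by
  have h1 : ((m+d:ℝ):ℂ)*Complex.I = (m:ℂ)*Complex.I + (d:ℂ)*Complex.I := by push_cast; ring
  have h2 : ((m-d:ℝ):ℂ)*Complex.I = (m:ℂ)*Complex.I + ((-d : ℝ):ℂ)*Complex.I := by
    push_cast; ring
  rw [h1, h2, Complex.exp_add, Complex.exp_add, Complex.exp_mul_I, Complex.exp_mul_I,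
    Complex.exp_mul_I]
  simp only [Complex.ofReal_neg, Complex.cos_neg, Complex.sin_neg, ← Complex.ofReal_sin,
    ← Complex.ofReal_cos]
  ring

lemma exp_sub_exp (x y : ℝ) :
    Complex.exp (x*Complex.I) - Complex.exp (y*Complex.I)
      = 2 * Real.sin ((x-y)/2) * Complex.I * Complex.exp ((((x+y)/2 : ℝ))*Complex.I) := by
  have := exp_sub_exp' ((x+y)/2) ((x-y)/2)
  rw [show (x+y)/2 + (x-y)/2 = x by ring, show (x+y)/2 - (x-y)/2 = y by ring] at this
  exact this

set_option maxHeartbeats 1000000 in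
lemma radius_formula (β γ ε : ℝ) (hε : 0 < ε) (hγε : ε < γ) (hβγ : γ < β)
    (hy : (β - ε)/2 < Real.pi)
    (S T O : ℂ)
    (hT : T = (Complex.exp (γ*Complex.I) + Complex.exp (ε*Complex.I))/2)
    (hS : S ∈ segment ℝ (Complex.exp (β*Complex.I)) (Complex.exp (γ*Complex.I)))
    (hSn : ‖Complex.exp (γ*Complex.I) - S‖ = ‖Complex.exp (γ*Complex.I) - T‖)
    (hO1 : ((O - S) * starRingEnd ℂ (Complex.exp (γ*Complex.I) - Complex.exp (β*Complex.I))).re = 0)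
    (hO2 : ((O - T) * starRingEnd ℂ (Complex.exp (ε*Complex.I) - Complex.exp (γ*Complex.I))).re = 0) :
    ‖O - T‖ = Real.sin ((γ-ε)/2) * (1 + Real.cos ((β-ε)/2)) / Real.sin ((β-ε)/2) := by
  set p : ℝ := (β-γ)/2 with hp
  set q : ℝ := (γ-ε)/2 with hq
  set yy : ℝ := (β-ε)/2 with hyy
  have hpq : yy = p + q := by rw [hp, hq, hyy]; ring
  have hp0 : 0 < p := by rw [hp]; linarith
  have hq0 : 0 < q := by rw [hq]; linarith
  have hsp : 0 < Real.sin p := Real.sin_pos_of_pos_of_lt_pi hp0 (by rw [hpq] at hy; linarith)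
  have hsq : 0 < Real.sin q := Real.sin_pos_of_pos_of_lt_pi hq0 (by rw [hpq] at hy; linarith)
  have hsy : 0 < Real.sin yy := Real.sin_pos_of_pos_of_lt_pi (by rw [hpq]; linarith) hy
  -- abbreviations
  set u : ℂ := Complex.exp (γ*Complex.I) - Complex.exp (β*Complex.I) with hu0
  set v : ℂ := Complex.exp (ε*Complex.I) - Complex.exp (γ*Complex.I) with hv0
  have hu : u = 2 * Real.sin ((γ-β)/2) * Complex.I * Complex.exp ((((γ+β)/2 : ℝ))*Complex.I) :=
    exp_sub_exp γ β
  have hv : v = 2 * Real.sin ((ε-γ)/2) * Complex.I * Complex.exp ((((ε+γ)/2 : ℝ))*Complex.I) :=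
    exp_sub_exp ε γ
  have hsgb : Real.sin ((γ-β)/2) = - Real.sin p := by
    rw [hp, show (γ-β)/2 = -((β-γ)/2) by ring, Real.sin_neg]
  have hseg : Real.sin ((ε-γ)/2) = - Real.sin q := by
    rw [hq, show (ε-γ)/2 = -((γ-ε)/2) by ring, Real.sin_neg]
  have hnormexp : ∀ t : ℝ, ‖Complex.exp ((t:ℝ)*Complex.I)‖ = 1 := fun t => by
    rw [Complex.norm_exp_ofReal_mul_I]
  have hnu : ‖u‖ = 2 * Real.sin p := by
    rw [hu, hsgb,
      show (2:ℂ) * ↑(-Real.sin p) * Complex.I * Complex.exp ((((γ+β)/2 : ℝ))*Complex.I)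
        = ((-(2*Real.sin p) : ℝ) : ℂ) * (Complex.I * Complex.exp ((((γ+β)/2 : ℝ))*Complex.I)) by
        push_cast; ring]
    simp only [norm_mul, Complex.norm_real, Complex.norm_I, hnormexp, Real.norm_eq_abs, abs_neg]
    rw [_root_.abs_of_nonneg (show (0:ℝ) ≤ 2*Real.sin p by positivity)]
    ring
  have hnv : ‖v‖ = 2 * Real.sin q := by
    rw [hv, hseg,
      show (2:ℂ) * ↑(-Real.sin q) * Complex.I * Complex.exp ((((ε+γ)/2 : ℝ))*Complex.I)
        = ((-(2*Real.sin q) : ℝ) : ℂ) * (Complex.I * Complex.exp ((((ε+γ)/2 : ℝ))*Complex.I)) by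
        push_cast; ring]
    simp only [norm_mul, Complex.norm_real, Complex.norm_I, hnormexp, Real.norm_eq_abs, abs_neg]
    rw [_root_.abs_of_nonneg (show (0:ℝ) ≤ 2*Real.sin q by positivity)]
    ring
  have hconjexp : ∀ t : ℝ, (starRingEnd ℂ) (Complex.exp ((t:ℝ)*Complex.I))
      = Complex.exp (((-t : ℝ))*Complex.I) := by
    intro t
    rw [← Complex.exp_conj]
    congr 1
    simp [Complex.conj_ofReal]
  have hmul : ∀ s t : ℝ, Complex.exp ((s:ℝ)*Complex.I) * Complex.exp ((t:ℝ)*Complex.I)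
      = Complex.exp (((s+t : ℝ))*Complex.I) := by
    intro s t
    rw [← Complex.exp_add]
    congr 1
    push_cast
    ring
  -- key product
  have key1 : v * (starRingEnd ℂ) u
      = ((4*Real.sin p*Real.sin q : ℝ) : ℂ) * Complex.exp (((-yy : ℝ))*Complex.I) := by
    rw [hv, hu, hseg, hsgb]
    simp only [map_mul, Complex.conj_I, hconjexp, Complex.conj_ofReal, map_ofNat]
    rw [show (2 * ((-Real.sin q : ℝ):ℂ) * Complex.I * Complex.exp ((((ε+γ)/2 :ℝ))*Complex.I)) *
          (2 * ((-Real.sin p : ℝ):ℂ) * -Complex.I * Complex.exp (((-((γ+β)/2) :ℝ))*Complex.I))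
        = -(4 * ((Real.sin p : ℝ):ℂ) * ((Real.sin q : ℝ):ℂ)) * (Complex.I*Complex.I) *
          (Complex.exp ((((ε+γ)/2 :ℝ))*Complex.I) * Complex.exp (((-((γ+β)/2) :ℝ))*Complex.I)) by
        push_cast; ring]
    rw [Complex.I_mul_I, hmul]
    rw [show (ε+γ)/2 + -((γ+β)/2) = -yy by rw [hyy]; ring]
    push_cast
    ring
  -- T and S
  have hnT : ‖Complex.exp (γ*Complex.I) - T‖ = Real.sin q := by
    rw [hT, show Complex.exp (γ*Complex.I)
        - (Complex.exp (γ*Complex.I) + Complex.exp (ε*Complex.I))/2 = -v/2 by rw [hv0]; ring]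
    rw [norm_div, norm_neg, hnv]
    simp
  obtain ⟨a, b2, ha, hb2, hab, hSdef⟩ := hS
  have hAS : Complex.exp (γ*Complex.I) - S = ((a:ℝ):ℂ) * u := by
    rw [← hSdef, hu0, show b2 = 1 - a by linarith]
    push_cast [Complex.real_smul]
    ring
  set c : ℝ := Real.sin q / (2*Real.sin p) with hc
  have hac : a = c := by
    have h1 : ‖Complex.exp (γ*Complex.I) - S‖ = a * (2*Real.sin p) := by
      rw [hAS, norm_mul, Complex.norm_real, Real.norm_eq_abs, _root_.abs_of_nonneg ha, hnu]
    rw [hSn, hnT] at h1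
    rw [hc]
    field_simp
    linarith [h1]
  have hTS : T - S = v/2 + ((c:ℝ):ℂ) * u := by
    have h2 : T - S = (T - Complex.exp (γ*Complex.I)) + (Complex.exp (γ*Complex.I) - S) := by
      ring
    rw [h2, hAS, hac, hT, hv0]
    ring
  -- the center equation
  set w : ℂ := O - T with hw
  have hvne : v ≠ 0 := by
    intro h
    rw [h, norm_zero] at hnv
    nlinarith
  set b : ℝ := (w * (starRingEnd ℂ) v).im / Complex.normSq v with hb
  have hwc : w * (starRingEnd ℂ) v = (((w * (starRingEnd ℂ) v).im : ℝ):ℂ) * Complex.I := by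
    apply Complex.ext
    · simpa using hO2
    · simp
  have hnsq : Complex.normSq v ≠ 0 := by
    simpa using hvne
  have hz : ((Complex.normSq v : ℝ):ℂ) ≠ 0 := Complex.ofReal_ne_zero.mpr hnsq
  have hwb : w = ((b:ℝ):ℂ) * (Complex.I * v) := by
    have h3 : w * ((Complex.normSq v : ℝ):ℂ)
        = (((w * (starRingEnd ℂ) v).im : ℝ):ℂ) * Complex.I * v := by
      rw [show w * ((Complex.normSq v : ℝ):ℂ) = (w * (starRingEnd ℂ) v) * v by
        rw [mul_assoc, mul_comm ((starRingEnd ℂ) v) v, Complex.mul_conj]]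
      rw [hwc]
      simp
    rw [hb]
    push_cast
    rw [div_mul_eq_mul_div, eq_div_iff hz]
    linear_combination h3
  have hre1 : (w * (starRingEnd ℂ) u).re = b * (4*Real.sin p*Real.sin q*Real.sin yy) := by
    rw [hwb, show ((b:ℝ):ℂ) * (Complex.I * v) * (starRingEnd ℂ) u
        = ((b:ℝ):ℂ) * (Complex.I * (v * (starRingEnd ℂ) u)) by ring, key1,
      Complex.re_ofReal_mul,
      show Complex.I * (((4*Real.sin p*Real.sin q : ℝ):ℂ) * Complex.exp (((-yy : ℝ))*Complex.I))
        = ((4*Real.sin p*Real.sin q : ℝ):ℂ) * (Complex.I * Complex.exp (((-yy : ℝ))*Complex.I))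
        by ring,
      Complex.re_ofReal_mul, Complex.I_mul_re, Complex.exp_ofReal_mul_I_im, Real.sin_neg]
    ring
  have hre2 : ((v/2) * (starRingEnd ℂ) u).re = 2*Real.sin p*Real.sin q*Real.cos yy := by
    rw [show (v/2) * (starRingEnd ℂ) u = (((1/2 : ℝ)):ℂ) * (v * (starRingEnd ℂ) u) by
        push_cast; ring, key1, ← mul_assoc, ← Complex.ofReal_mul, Complex.re_ofReal_mul,
      Complex.exp_ofReal_mul_I_re, Real.cos_neg]
    ring
  have hre3 : ((((c:ℝ):ℂ) * u) * (starRingEnd ℂ) u).re = 2*Real.sin p*Real.sin q := by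
    rw [mul_assoc, Complex.mul_conj]
    have hnsu : Complex.normSq u = (2*Real.sin p)^2 := by
      rw [Complex.normSq_eq_norm_sq, hnu]
    rw [← Complex.ofReal_mul, Complex.ofReal_re, hnsu, hc]
    field_simp
  have hO1' : ((w + (v/2 + ((c:ℝ):ℂ)*u)) * (starRingEnd ℂ) u).re = 0 := by
    rw [show w + (v/2 + ((c:ℝ):ℂ)*u) = O - S by rw [hw, ← hTS]; ring]
    exact hO1
  rw [add_mul, add_mul, Complex.add_re, Complex.add_re, hre1, hre2, hre3] at hO1'
  have hs : (0:ℝ) < Real.sin p * Real.sin q := by positivity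
  have hbval : b = -(1 + Real.cos yy)/(2*Real.sin yy) := by
    have h4 : b * (4*(Real.sin p*Real.sin q)*Real.sin yy)
        = -(2*(Real.sin p*Real.sin q)*(1+Real.cos yy)) := by linarith [hO1']
    have h5 : b = -(2*(Real.sin p*Real.sin q)*(1+Real.cos yy))
        / (4*(Real.sin p*Real.sin q)*Real.sin yy) := by
      rw [eq_div_iff (by positivity)]
      exact h4
    rw [h5]
    field_simp
    ring
  have hnw : ‖w‖ = |b| * (2*Real.sin q) := by
    rw [hwb, norm_mul, Complex.norm_real, Real.norm_eq_abs, norm_mul, Complex.norm_I, one_mul,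
      hnv]
  have hcos : (0:ℝ) ≤ 1 + Real.cos yy := by nlinarith [Real.neg_one_le_cos yy]
  rw [hnw, hbval, abs_div, abs_neg, _root_.abs_of_nonneg hcos,
    _root_.abs_of_nonneg (show (0:ℝ) ≤ 2*Real.sin yy by positivity)]
  field_simp

set_option maxHeartbeats 1000000 in
/-- The radius-of-curvature limit in the modified Shapiro construction: with
`α_n = Cλⁿ`, `A_n = e^{iα_n}`, `T_n` the midpoint of `[A_n, A_{n+1}]`, `S_n` the point
of `[A_{n−1}, A_n]` with `‖A_n − S_n‖ = ‖A_n − T_n‖`, and `O_n` the center of the circle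
tangent to the two segments at `S_n` and `T_n` with radius `r_n`, one has
`r_n → 2λ/(1 + λ)`. -/
theorem radius_of_curvature_limit (l C : ℝ)
    (hl : l ∈ Set.Ioo (0 : ℝ) 1) (hC : 0 < C) (hCl : C * l ≤ Real.pi)
    (α : ℕ → ℝ) (hα : ∀ n, α n = C * l ^ n)
    (A : ℕ → ℂ) (hA : ∀ n, A n = Complex.exp (α n * Complex.I))
    (T : ℕ → ℂ) (hT : ∀ n, T n = (A n + A (n + 1)) / 2)
    (S : ℕ → ℂ)
    (hS : ∀ n, 1 ≤ n → S n ∈ segment ℝ (A (n - 1)) (A n) ∧ ‖A n - S n‖ = ‖A n - T n‖)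
    (O : ℕ → ℂ)
    (hO : ∀ n, 1 ≤ n →
      ((O n - S n) * starRingEnd ℂ (A n - A (n - 1))).re = 0 ∧
      ((O n - T n) * starRingEnd ℂ (A (n + 1) - A n)).re = 0)
    (r : ℕ → ℝ)
    (hr : ∀ n, 1 ≤ n → 0 < r n ∧ r n = ‖O n - S n‖ ∧ r n = ‖O n - T n‖) :
    Filter.Tendsto r Filter.atTop (nhds (2 * l / (1 + l))) := by
  obtain ⟨hl0, hl1⟩ := hl
  set k₁ : ℝ := (1 - l)/2 with hk₁
  set k₂ : ℝ := (1 - l^2)/(2*l) with hk₂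
  have hl2 : (0:ℝ) < 1 - l^2 := by nlinarith
  have hk₁0 : 0 < k₁ := by rw [hk₁]; linarith
  have hk₂0 : 0 < k₂ := by rw [hk₂]; positivity
  have key : ∀ m : ℕ, 1 ≤ m → r (m+1) =
      (Real.sin (k₁ * (C*l^(m+1))) / (k₁ * (C*l^(m+1)))) *
      ((k₂ * (C*l^(m+1))) / Real.sin (k₂ * (C*l^(m+1)))) *
      (1 + Real.cos (k₂ * (C*l^(m+1)))) * (k₁/k₂) := by
    intro m hm
    have hlm : l^m ≤ l := by
      calc l^m ≤ l^1 := pow_le_pow_of_le_one hl0.le hl1.le hm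
      _ = l := pow_one l
    have hβπ : C * l^m ≤ Real.pi :=
      le_trans (mul_le_mul_of_nonneg_left hlm hC.le) hCl
    have hεγ : α (m+2) < α (m+1) := by
      rw [hα, hα]
      have h : l^(m+2) < l^(m+1) := by
        rw [pow_succ]
        nlinarith [pow_pos hl0 (m+1)]
      exact mul_lt_mul_of_pos_left h hC
    have hγβ : α (m+1) < α m := by
      rw [hα, hα]
      have h : l^(m+1) < l^m := by
        rw [pow_succ]
        nlinarith [pow_pos hl0 m]
      exact mul_lt_mul_of_pos_left h hC
    have hε0 : 0 < α (m+2) := by rw [hα]; positivity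
    have hy : (α m - α (m+2))/2 < Real.pi := by
      rw [hα, hα]
      nlinarith [Real.pi_pos, mul_pos hC (pow_pos hl0 (m+2))]
    have hm1 : 1 ≤ m + 1 := by omega
    have hSm := hS (m+1) hm1
    have hOm := hO (m+1) hm1
    have hrm := hr (m+1) hm1
    have hidx : (m+1) - 1 = m := by omega
    rw [hidx] at hSm hOm
    have hform := radius_formula (α m) (α (m+1)) (α (m+2)) hε0 hεγ hγβ hy
        (S (m+1)) (T (m+1)) (O (m+1))
        (by rw [hT (m+1), hA (m+1), hA (m+2)])
        (by have h := hSm.1; rwa [hA m, hA (m+1)] at h)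
        (by have h := hSm.2; rwa [hA (m+1)] at h)
        (by have h := hOm.1; rwa [hA (m+1), hA m] at h)
        (by have h := hOm.2; rwa [hA (m+2), hA (m+1)] at h)
    rw [hrm.2.2, hform]
    have e1 : (α (m+1) - α (m+2))/2 = k₁ * (C*l^(m+1)) := by
      rw [hα, hα, hk₁, pow_succ l (m+1)]
      ring
    have e2 : (α m - α (m+2))/2 = k₂ * (C*l^(m+1)) := by
      rw [hα, hα, hk₂, pow_succ l (m+1), pow_succ l m]
      field_simp
    rw [e1, e2]
    have hxpos : 0 < C * l^(m+1) := by positivity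
    have hk2x : k₂ * (C*l^(m+1)) < Real.pi := by
      have h : k₂*(C*l^(m+1)) = (C*l^m) * ((1-l^2)/2) := by
        rw [hk₂, pow_succ]
        field_simp
        ring
      rw [h]
      nlinarith [Real.pi_pos, mul_pos hC (pow_pos hl0 m)]
    have hsk2 : 0 < Real.sin (k₂ * (C*l^(m+1))) :=
      Real.sin_pos_of_pos_of_lt_pi (by positivity) hk2x
    field_simp
  -- limits
  have hx : Filter.Tendsto (fun n : ℕ => C * l^n) Filter.atTop (nhds 0) := by
    have h := tendsto_pow_atTop_nhds_zero_of_lt_one hl0.le hl1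
    have h2 := h.const_mul C
    simpa using h2
  have hxk : ∀ k : ℝ, 0 < k →
      Filter.Tendsto (fun n : ℕ => k * (C * l^n)) Filter.atTop (nhdsWithin 0 {(0:ℝ)}ᶜ) := by
    intro k hk
    apply tendsto_nhdsWithin_of_tendsto_nhds_of_eventually_within
    · have h2 := hx.const_mul k
      simpa using h2
    · filter_upwards with n
      have : 0 < k * (C * l^n) := by positivity
      exact Set.mem_compl_singleton_iff.mpr (ne_of_gt this)
  have hsin : Filter.Tendsto (fun t : ℝ => Real.sin t / t) (nhdsWithin 0 {(0:ℝ)}ᶜ) (nhds 1) := by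
    have hd := Real.hasDerivAt_sin 0
    rw [Real.cos_zero] at hd
    have h := hasDerivAt_iff_tendsto_slope.mp hd
    have hslope : slope Real.sin 0 = fun t : ℝ => Real.sin t / t := by
      funext t
      rw [slope_def_field]
      simp
    rwa [hslope] at h
  have m1 : Filter.Tendsto (fun n : ℕ => Real.sin (k₁*(C*l^n)) / (k₁*(C*l^n)))
      Filter.atTop (nhds 1) := hsin.comp (hxk k₁ hk₁0)
  have m2 : Filter.Tendsto (fun n : ℕ => Real.sin (k₂*(C*l^n)) / (k₂*(C*l^n)))
      Filter.atTop (nhds 1) := hsin.comp (hxk k₂ hk₂0)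
  have m2' : Filter.Tendsto (fun n : ℕ => (k₂*(C*l^n)) / Real.sin (k₂*(C*l^n)))
      Filter.atTop (nhds 1) := by
    have h := m2.inv₀ one_ne_zero
    simp only [inv_div, inv_one] at h
    exact h
  have m3 : Filter.Tendsto (fun n : ℕ => 1 + Real.cos (k₂*(C*l^n)))
      Filter.atTop (nhds 2) := by
    have hc : Filter.Tendsto (fun n : ℕ => Real.cos (k₂*(C*l^n))) Filter.atTop (nhds 1) := by
      have h2 := hx.const_mul k₂
      rw [mul_zero] at h2
      have h3 := (Real.continuous_cos.tendsto 0).comp h2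
      rw [Real.cos_zero] at h3
      exact h3
    have h4 := hc.const_add 1
    norm_num at h4
    exact h4
  have mP := ((m1.mul m2').mul m3).mul (tendsto_const_nhds (x := k₁/k₂) (f := Filter.atTop))
  have hval : 1 * 1 * 2 * (k₁/k₂) = 2*l/(1+l) := by
    rw [hk₁, hk₂]
    have h1 : (1:ℝ) + l ≠ 0 := by linarith
    field_simp
    ring
  rw [hval] at mP
  refine mP.congr' ?_
  rw [Filter.EventuallyEq, Filter.eventually_atTop]
  refine ⟨2, fun n hn => ?_⟩
  obtain ⟨m, rfl⟩ : ∃ m, n = m + 1 := ⟨n-1, by omega⟩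
  exact (key m (by omega)).symm
end
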